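/- arXiv:math/0411452 — 2 statements merged into one kernel-verified Lean document; each statement's English description precedes it below -/
import Mathlib

section
/- Let q > 2, let e_1, f_1, …, e_ν, f_ν denote the standard basis vectors of F_q^{(2ν)} (in this order), and let E be the subgroup of Aut(Sp(2ν,q)) consisting of those automorphisms σ with σ([e_i]) = [e_i] and σ([f_i]) = [f_i] for i = 1, …, ν. Regarding the group of automorphisms of the form [α] ↦ [αT] with T a symplectic matrix (a copy of PSp_{2ν}(F_q)) as a subgroup of Aut(Sp(2ν,q)), every automorphism of Sp(2ν,q) is a product of an element of this subgroup and an element of E, i.e., Aut(Sp(2ν,q)) = PSp_{2ν}(F_q) · E. -/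
open Matrix

/-- The standard nonsingular alternate matrix over `F` with `ν` diagonal blocks
`[[0,1],[-1,0]]`. -/
def sK (F : Type) [Field F] (ν : ℕ) : Matrix (Fin (2 * ν)) (Fin (2 * ν)) F :=
  Matrix.of fun i j =>
    if i.val % 2 = 0 ∧ j.val = i.val + 1 then (1 : F)
    else if j.val % 2 = 0 ∧ i.val = j.val + 1 then (-1 : F) else 0

/-- The symplectic graph `Sp(2ν, q)`: vertices are the one-dimensional subspaces
of `F^(2ν)`, with `[α]` adjacent to `[β]` iff `α K βᵀ ≠ 0`. -/
def SpG (F : Type) [Field F] (ν : ℕ) :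
    SimpleGraph (Projectivization F (Fin (2 * ν) → F)) :=
  SimpleGraph.fromRel fun x y => x.rep ⬝ᵥ ((sK F ν) *ᵥ y.rep) ≠ 0

theorem vecMul_unit_ne_zero {n : Type} [Fintype n] [DecidableEq n] {F : Type} [Field F]
    {T : Matrix n n F} (hT : IsUnit T) {v : n → F} (hv : v ≠ 0) :
    v ᵥ* T ≠ 0 := by
  intro h
  apply hv
  have h2 := congrArg (fun w => w ᵥ* ((hT.unit⁻¹ : (Matrix n n F)ˣ) : Matrix n n F)) h
  simp only [Matrix.vecMul_vecMul, Matrix.zero_vecMul] at h2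
  rw [IsUnit.mul_val_inv, Matrix.vecMul_one] at h2
  exact h2

/-- The standard basis vector `e_i` of `F^(2ν)`. -/
def eVec (F : Type) [Field F] (ν : ℕ) (i : Fin ν) : Fin (2 * ν) → F :=
  Pi.single ⟨2 * i.val, by have := i.isLt; omega⟩ 1

/-- The standard basis vector `f_i` of `F^(2ν)`. -/
def fVec (F : Type) [Field F] (ν : ℕ) (i : Fin ν) : Fin (2 * ν) → F :=
  Pi.single ⟨2 * i.val + 1, by have := i.isLt; omega⟩ 1

theorem eVec_ne_zero (F : Type) [Field F] (ν : ℕ) (i : Fin ν) : eVec F ν i ≠ 0 := by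
  intro h
  have := congrFun h ⟨2 * i.val, by have := i.isLt; omega⟩
  simp [eVec, Pi.single_eq_same] at this

theorem fVec_ne_zero (F : Type) [Field F] (ν : ℕ) (i : Fin ν) : fVec F ν i ≠ 0 := by
  intro h
  have := congrFun h ⟨2 * i.val + 1, by have := i.isLt; omega⟩
  simp [fVec, Pi.single_eq_same] at this

/-- The vertex `[e_i]` of `Sp(2ν,q)`. -/
def eP (F : Type) [Field F] (ν : ℕ) (i : Fin ν) : Projectivization F (Fin (2 * ν) → F) :=
  Projectivization.mk F (eVec F ν i) (eVec_ne_zero F ν i)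

/-- The vertex `[f_i]` of `Sp(2ν,q)`. -/
def fP (F : Type) [Field F] (ν : ℕ) (i : Fin ν) : Projectivization F (Fin (2 * ν) → F) :=
  Projectivization.mk F (fVec F ν i) (fVec_ne_zero F ν i)

variable {F : Type} [Field F] {ν : ℕ}

/-- partner index -/
def ptn {ν : ℕ} (i : Fin (2 * ν)) : Fin (2 * ν) :=
  ⟨if i.val % 2 = 0 then i.val + 1 else i.val - 1, by
    have := i.isLt; by_cases h : i.val % 2 = 0 <;> simp [h] <;> omega⟩

lemma sK_apply_eq_zero {i k : Fin (2 * ν)} (h : k ≠ ptn i) : sK F ν i k = 0 := by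
  have hk : k.val ≠ (ptn i).val := fun hh => h (Fin.ext hh)
  simp only [ptn] at hk
  simp only [sK, Matrix.of_apply]
  split_ifs with h1 h2
  · exfalso; obtain ⟨h1a, h1b⟩ := h1; simp [h1a] at hk; omega
  · exfalso; obtain ⟨h2a, h2b⟩ := h2
    have : i.val % 2 = 1 := by omega
    simp [this] at hk; omega
  · rfl

lemma sK_mulVec (v : Fin (2 * ν) → F) (i : Fin (2 * ν)) :
    (sK F ν *ᵥ v) i = sK F ν i (ptn i) * v (ptn i) := by
  rw [Matrix.mulVec, dotProduct]
  exact Finset.sum_eq_single (ptn i)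
    (fun k _ hk => by rw [sK_apply_eq_zero hk, zero_mul])
    (fun h => absurd (Finset.mem_univ _) h)

lemma ptn_val_even {i : Fin (2 * ν)} (h : i.val % 2 = 0) : (ptn i).val = i.val + 1 := by
  simp [ptn, h]

lemma ptn_val_odd {i : Fin (2 * ν)} (h : i.val % 2 = 1) : (ptn i).val = i.val - 1 := by
  have h2 : ¬ (i.val % 2 = 0) := by omega
  simp [ptn, h2]

lemma sK_apply_ptn_even {i : Fin (2 * ν)} (h : i.val % 2 = 0) : sK F ν i (ptn i) = 1 := by
  simp only [sK, Matrix.of_apply, ptn_val_even h]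
  exact if_pos ⟨h, trivial⟩

lemma sK_apply_ptn_odd {i : Fin (2 * ν)} (h : i.val % 2 = 1) : sK F ν i (ptn i) = -1 := by
  have h1 : i.val ≥ 1 := by omega
  simp only [sK, Matrix.of_apply, ptn_val_odd h]
  rw [if_neg (by omega), if_pos ⟨by omega, by omega⟩]

lemma sK_self (i : Fin (2 * ν)) : sK F ν i i = 0 := by
  simp only [sK, Matrix.of_apply]
  rw [if_neg (by omega), if_neg (by omega)]

lemma sK_antisymm (i j : Fin (2 * ν)) : sK F ν j i = - sK F ν i j := by
  simp only [sK, Matrix.of_apply]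
  split_ifs <;> first | (exfalso; omega) | ring

lemma sK_transpose : (sK F ν)ᵀ = -(sK F ν) := by
  ext i j; rw [Matrix.transpose_apply, Matrix.neg_apply, sK_antisymm]

lemma B_comm (u v : Fin (2 * ν) → F) :
    u ⬝ᵥ (sK F ν *ᵥ v) = -(v ⬝ᵥ (sK F ν *ᵥ u)) := by
  rw [Matrix.dotProduct_mulVec, ← Matrix.mulVec_transpose, sK_transpose,
    Matrix.neg_mulVec, neg_dotProduct, dotProduct_comm]

lemma ptn_ptn {ν : ℕ} (i : Fin (2 * ν)) : ptn (ptn i) = i := by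
  apply Fin.ext
  rcases Nat.mod_two_eq_zero_or_one i.val with h | h
  · have h1 := ptn_val_even h
    have h2 : (ptn i).val % 2 = 1 := by omega
    rw [ptn_val_odd h2, h1]
    omega
  · have h1 := ptn_val_odd h
    have h2 : (ptn i).val % 2 = 0 := by omega
    rw [ptn_val_even h2, h1]
    omega

lemma B_self (u : Fin (2 * ν) → F) : u ⬝ᵥ (sK F ν *ᵥ u) = 0 := by
  rw [dotProduct]
  apply Finset.sum_ninvolution ptn
  · intro i
    rcases Nat.mod_two_eq_zero_or_one i.val with h | h
    · have h2 : (ptn i).val % 2 = 1 := by rw [ptn_val_even h]; omega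
      rw [sK_mulVec, sK_mulVec, sK_apply_ptn_even h, sK_apply_ptn_odd h2, ptn_ptn]
      ring
    · have h2 : (ptn i).val % 2 = 0 := by rw [ptn_val_odd h]; omega
      rw [sK_mulVec, sK_mulVec, sK_apply_ptn_odd h, sK_apply_ptn_even h2, ptn_ptn]
      ring
  · intro i _
    intro hc
    have := congrArg Fin.val hc
    rcases Nat.mod_two_eq_zero_or_one i.val with h | h
    · rw [ptn_val_even h] at this; omega
    · rw [ptn_val_odd h] at this; omega
  · intro _; exact Finset.mem_univ _
  · exact ptn_ptn

lemma sK_mul_transpose : sK F ν * (sK F ν)ᵀ = 1 := by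
  ext i j
  have : (sK F ν * (sK F ν)ᵀ) i j = (sK F ν *ᵥ (fun k => (sK F ν)ᵀ k j)) i := by
    simp [Matrix.mul_apply, Matrix.mulVec, dotProduct]
  rw [this]
  simp only [sK_mulVec, Matrix.transpose_apply]
  by_cases hj : j = i
  · subst hj
    rw [Matrix.one_apply_eq]
    rcases Nat.mod_two_eq_zero_or_one j.val with h | h
    · rw [sK_apply_ptn_even h]; ring
    · rw [sK_apply_ptn_odd h]; ring
  · rw [Matrix.one_apply_ne' hj]
    have hp : ptn i ≠ ptn j := fun hh => hj (by rw [← ptn_ptn j, ← hh, ptn_ptn])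
    rw [sK_apply_eq_zero hp, mul_zero]

lemma B_single_single (k l : Fin (2 * ν)) :
    Pi.single k (1 : F) ⬝ᵥ (sK F ν *ᵥ Pi.single l 1) = sK F ν k l := by
  rw [single_dotProduct, one_mul, sK_mulVec]
  by_cases h : l = ptn k
  · subst h; rw [Pi.single_eq_same, mul_one]
  · rw [Pi.single_eq_of_ne (fun hh => h hh.symm), mul_zero, sK_apply_eq_zero h]

lemma B_smul_smul (c d : F) (u v : Fin (2 * ν) → F) :
    (c • u) ⬝ᵥ (sK F ν *ᵥ (d • v)) = (c * d) * (u ⬝ᵥ (sK F ν *ᵥ v)) := by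
  rw [Matrix.mulVec_smul, smul_dotProduct, dotProduct_smul]
  simp [smul_eq_mul]; ring

lemma mk_single_ne {a b : Fin (2 * ν)} (hab : a ≠ b)
    (ha : (Pi.single a 1 : Fin (2 * ν) → F) ≠ 0) (hb : (Pi.single b 1 : Fin (2 * ν) → F) ≠ 0) :
    Projectivization.mk F (Pi.single a (1 : F)) ha ≠ Projectivization.mk F (Pi.single b 1) hb := by
  rw [Ne, Projectivization.mk_eq_mk_iff]
  rintro ⟨c, hc⟩
  have h2 := congrFun hc a
  rw [Pi.smul_apply, Pi.single_eq_same, Pi.single_eq_of_ne hab, smul_zero] at h2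
  exact one_ne_zero h2.symm

lemma B_vecMul {T : Matrix (Fin (2 * ν)) (Fin (2 * ν)) F} (h : T * sK F ν * Tᵀ = sK F ν)
    (u v : Fin (2 * ν) → F) :
    (u ᵥ* T) ⬝ᵥ (sK F ν *ᵥ (v ᵥ* T)) = u ⬝ᵥ (sK F ν *ᵥ v) := by
  have hv : v ᵥ* T = Tᵀ *ᵥ v := (Matrix.mulVec_transpose T v).symm
  rw [hv, Matrix.mulVec_mulVec, Matrix.dotProduct_mulVec, Matrix.vecMul_vecMul,
    ← Matrix.mul_assoc, h, ← Matrix.dotProduct_mulVec]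

lemma vecMulLinear_injective {T : Matrix (Fin (2 * ν)) (Fin (2 * ν)) F} (hT : IsUnit T) :
    Function.Injective (Matrix.vecMulLinear T) := by
  intro u v huv
  by_contra hne
  exact vecMul_unit_ne_zero hT (sub_ne_zero.mpr hne)
    (by rw [Matrix.sub_vecMul]
        simp only [Matrix.vecMulLinear_apply] at huv
        rw [huv, sub_self])

noncomputable def sigmaEquiv (T : Matrix (Fin (2 * ν)) (Fin (2 * ν)) F) (hT : IsUnit T) :
    Projectivization F (Fin (2 * ν) → F) ≃ Projectivization F (Fin (2 * ν) → F) where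
  toFun := Projectivization.map (Matrix.vecMulLinear T) (vecMulLinear_injective hT)
  invFun := Projectivization.map (Matrix.vecMulLinear (↑hT.unit⁻¹ : Matrix _ _ F))
    (vecMulLinear_injective (Units.isUnit _))
  left_inv := by
    intro x
    induction x with
    | h v hv =>
      rw [Projectivization.map_mk, Projectivization.map_mk]
      have hvec : Matrix.vecMulLinear (↑hT.unit⁻¹ : Matrix _ _ F) (Matrix.vecMulLinear T v) = v := by
        simp only [Matrix.vecMulLinear_apply, Matrix.vecMul_vecMul]
        rw [IsUnit.mul_val_inv, Matrix.vecMul_one]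
      exact (Projectivization.mk_eq_mk_iff F _ _ _ hv).mpr ⟨1, by rw [one_smul, hvec]⟩
  right_inv := by
    intro x
    induction x with
    | h v hv =>
      rw [Projectivization.map_mk, Projectivization.map_mk]
      have hvec : Matrix.vecMulLinear T (Matrix.vecMulLinear (↑hT.unit⁻¹ : Matrix _ _ F) v) = v := by
        simp only [Matrix.vecMulLinear_apply, Matrix.vecMul_vecMul]
        rw [IsUnit.val_inv_mul, Matrix.vecMul_one]
      exact (Projectivization.mk_eq_mk_iff F _ _ _ hv).mpr ⟨1, by rw [one_smul, hvec]⟩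

lemma sigmaEquiv_apply (T : Matrix (Fin (2 * ν)) (Fin (2 * ν)) F) (hT : IsUnit T)
    (x : Projectivization F (Fin (2 * ν) → F)) :
    sigmaEquiv T hT x = Projectivization.mk F (x.rep ᵥ* T) (vecMul_unit_ne_zero hT x.rep_nonzero) := by
  conv_lhs => rw [← Projectivization.mk_rep x]
  simp only [sigmaEquiv, Equiv.coe_fn_mk]
  rw [Projectivization.map_mk]
  rfl

variable {F : Type} [Field F] {ν : ℕ}

lemma B_smul_right (k : F) (u v : Fin (2 * ν) → F) :
    u ⬝ᵥ (sK F ν *ᵥ (k • v)) = k * (u ⬝ᵥ (sK F ν *ᵥ v)) := by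
  rw [Matrix.mulVec_smul, dotProduct_smul, smul_eq_mul]

lemma B_ee (i j : Fin ν) : eVec F ν i ⬝ᵥ (sK F ν *ᵥ eVec F ν j) = 0 := by
  rw [eVec, eVec, B_single_single]
  simp only [sK, Matrix.of_apply]
  rw [if_neg (by omega), if_neg (by omega)]

lemma B_ff (i j : Fin ν) : fVec F ν i ⬝ᵥ (sK F ν *ᵥ fVec F ν j) = 0 := by
  rw [fVec, fVec, B_single_single]
  simp only [sK, Matrix.of_apply]
  rw [if_neg (by omega), if_neg (by omega)]

lemma B_ef (i j : Fin ν) :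
    eVec F ν i ⬝ᵥ (sK F ν *ᵥ fVec F ν j) = if i = j then 1 else 0 := by
  rw [eVec, fVec, B_single_single]
  simp only [sK, Matrix.of_apply, Fin.val_mk]
  by_cases h : i = j
  · subst h
    rw [if_pos ⟨by omega, by omega⟩, if_pos rfl]
  · have hv : i.val ≠ j.val := fun hh => h (Fin.ext hh)
    rw [if_neg (by omega), if_neg (by omega), if_neg h]

lemma B_fe (i j : Fin ν) :
    fVec F ν i ⬝ᵥ (sK F ν *ᵥ eVec F ν j) = if i = j then -1 else 0 := by
  rw [B_comm, B_ef]
  by_cases h : i = j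
  · subst h; simp
  · rw [if_neg (fun hh => h hh.symm), if_neg h, neg_zero]

noncomputable def sigmaIso (T : Matrix (Fin (2 * ν)) (Fin (2 * ν)) F) (hT : IsUnit T)
    (hs : T * sK F ν * Tᵀ = sK F ν) : SpG F ν ≃g SpG F ν where
  toEquiv := sigmaEquiv T hT
  map_rel_iff' := by
    intro x y
    obtain ⟨cx, hcx⟩ := Projectivization.exists_smul_eq_mk_rep F (x.rep ᵥ* T)
      (vecMul_unit_ne_zero hT x.rep_nonzero)
    obtain ⟨cy, hcy⟩ := Projectivization.exists_smul_eq_mk_rep F (y.rep ᵥ* T)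
      (vecMul_unit_ne_zero hT y.rep_nonzero)
    have hrx : (sigmaEquiv T hT x).rep = (cx : F) • (x.rep ᵥ* T) := by
      rw [sigmaEquiv_apply]; exact hcx.symm
    have hry : (sigmaEquiv T hT y).rep = (cy : F) • (y.rep ᵥ* T) := by
      rw [sigmaEquiv_apply]; exact hcy.symm
    have hBxy : (sigmaEquiv T hT x).rep ⬝ᵥ (sK F ν *ᵥ (sigmaEquiv T hT y).rep)
        = ((cx : F) * cy) * (x.rep ⬝ᵥ (sK F ν *ᵥ y.rep)) := by
      rw [hrx, hry, B_smul_smul, B_vecMul hs]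
    have hByx : (sigmaEquiv T hT y).rep ⬝ᵥ (sK F ν *ᵥ (sigmaEquiv T hT x).rep)
        = ((cy : F) * cx) * (y.rep ⬝ᵥ (sK F ν *ᵥ x.rep)) := by
      rw [hrx, hry, B_smul_smul, B_vecMul hs]
    have hne : sigmaEquiv T hT x ≠ sigmaEquiv T hT y ↔ x ≠ y :=
      (Equiv.injective _).ne_iff
    simp only [SpG, SimpleGraph.fromRel_adj]
    rw [hBxy, hByx, hne]
    have h1 : ((cx : F) * cy) ≠ 0 := mul_ne_zero cx.ne_zero cy.ne_zero
    have h2 : ((cy : F) * cx) ≠ 0 := mul_ne_zero cy.ne_zero cx.ne_zero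
    simp [mul_ne_zero_iff, h1, h2]

lemma sigmaIso_apply (T : Matrix (Fin (2 * ν)) (Fin (2 * ν)) F) (hT : IsUnit T)
    (hs : T * sK F ν * Tᵀ = sK F ν) (x : Projectivization F (Fin (2 * ν) → F)) :
    sigmaIso T hT hs x = Projectivization.mk F (x.rep ᵥ* T)
      (vecMul_unit_ne_zero hT x.rep_nonzero) :=
  sigmaEquiv_apply T hT x

lemma mul_mul_transpose_apply {n : Type} [Fintype n] (A M : Matrix n n F) (r s : n) :
    (A * M * Aᵀ) r s = (fun k => A r k) ⬝ᵥ (M *ᵥ fun k => A s k) := by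
  simp only [Matrix.mul_apply, Matrix.transpose_apply, Matrix.mulVec, dotProduct]
  simp only [Finset.sum_mul, Finset.mul_sum]
  rw [Finset.sum_comm]
  apply Finset.sum_congr rfl
  intro k _
  apply Finset.sum_congr rfl
  intro l _
  ring

/-- `Aut(Sp(2ν,q)) = PSp_{2ν}(F_q) · E`: every automorphism `τ` factors as
`τ = σ ∘ e` where `σ` is induced by a symplectic matrix and `e` fixes all the
vertices `[e_i]` and `[f_i]`. -/
theorem aut_SpG_eq_PSp_mul_E (q ν : ℕ) (F : Type) [Field F] [Fintype F]
    (hF : Fintype.card F = q) (hq : 2 < q) (hν : 1 ≤ ν)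
    (τ : SpG F ν ≃g SpG F ν) :
    ∃ σ e : SpG F ν ≃g SpG F ν,
      (∃ (T : Matrix (Fin (2 * ν)) (Fin (2 * ν)) F) (hT : IsUnit T),
        T * sK F ν * Tᵀ = sK F ν ∧
        ∀ x : Projectivization F (Fin (2 * ν) → F),
          σ x = Projectivization.mk F (x.rep ᵥ* T)
            (vecMul_unit_ne_zero hT x.rep_nonzero)) ∧
      (∀ i : Fin ν, e (eP F ν i) = eP F ν i ∧ e (fP F ν i) = fP F ν i) ∧
      (∀ x : Projectivization F (Fin (2 * ν) → F), τ x = σ (e x)) := by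
  classical
  set a : Fin ν → (Fin (2 * ν) → F) := fun i => (τ (eP F ν i)).rep with ha
  set b : Fin ν → (Fin (2 * ν) → F) := fun i => (τ (fP F ν i)).rep with hb
  set c : Fin ν → F := fun i => a i ⬝ᵥ (sK F ν *ᵥ b i) with hc
  -- reps of the basis points
  obtain hue : ∀ i : Fin ν, ∃ u : Fˣ, (eP F ν i).rep = (u : F) • eVec F ν i := by
    intro i
    obtain ⟨u, hu⟩ := Projectivization.exists_smul_eq_mk_rep F (eVec F ν i) (eVec_ne_zero F ν i)
    exact ⟨u, hu.symm⟩
  obtain huf : ∀ i : Fin ν, ∃ u : Fˣ, (fP F ν i).rep = (u : F) • fVec F ν i := by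
    intro i
    obtain ⟨u, hu⟩ := Projectivization.exists_smul_eq_mk_rep F (fVec F ν i) (fVec_ne_zero F ν i)
    exact ⟨u, hu.symm⟩
  -- distinctness
  have hEF : ∀ i j : Fin ν, eP F ν i ≠ fP F ν j := by
    intro i j
    exact mk_single_ne (by intro hh; have := congrArg Fin.val hh; simp only [Fin.val_mk] at this; omega) _ _
  have hEE : ∀ i j : Fin ν, i ≠ j → eP F ν i ≠ eP F ν j := by
    intro i j hij
    have : i.val ≠ j.val := fun hh => hij (Fin.ext hh)
    exact mk_single_ne (by intro hh; have := congrArg Fin.val hh; simp only [Fin.val_mk] at this; omega) _ _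
  have hFF : ∀ i j : Fin ν, i ≠ j → fP F ν i ≠ fP F ν j := by
    intro i j hij
    have : i.val ≠ j.val := fun hh => hij (Fin.ext hh)
    exact mk_single_ne (by intro hh; have := congrArg Fin.val hh; simp only [Fin.val_mk] at this; omega) _ _
  -- adjacency facts for basis points
  have hadj : ∀ i : Fin ν, (SpG F ν).Adj (eP F ν i) (fP F ν i) := by
    intro i
    obtain ⟨u, hu⟩ := hue i
    obtain ⟨w, hw⟩ := huf i
    refine (SimpleGraph.fromRel_adj _ _ _).mpr ⟨hEF i i, Or.inl ?_⟩
    rw [hu, hw, B_smul_smul, B_ef, if_pos rfl, mul_one]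
    exact mul_ne_zero u.ne_zero w.ne_zero
  have hnEE : ∀ i j : Fin ν, i ≠ j → ¬ (SpG F ν).Adj (eP F ν i) (eP F ν j) := by
    intro i j hij hadj'
    obtain ⟨u, hu⟩ := hue i
    obtain ⟨w, hw⟩ := hue j
    obtain ⟨-, h | h⟩ := (SimpleGraph.fromRel_adj _ _ _).mp hadj'
    · rw [hu, hw, B_smul_smul, B_ee, mul_zero] at h; exact h rfl
    · rw [hu, hw, B_smul_smul, B_ee, mul_zero] at h; exact h rfl
  have hnFF : ∀ i j : Fin ν, i ≠ j → ¬ (SpG F ν).Adj (fP F ν i) (fP F ν j) := by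
    intro i j hij hadj'
    obtain ⟨u, hu⟩ := huf i
    obtain ⟨w, hw⟩ := huf j
    obtain ⟨-, h | h⟩ := (SimpleGraph.fromRel_adj _ _ _).mp hadj'
    · rw [hu, hw, B_smul_smul, B_ff, mul_zero] at h; exact h rfl
    · rw [hu, hw, B_smul_smul, B_ff, mul_zero] at h; exact h rfl
  have hnEF : ∀ i j : Fin ν, i ≠ j → ¬ (SpG F ν).Adj (eP F ν i) (fP F ν j) := by
    intro i j hij hadj'
    obtain ⟨u, hu⟩ := hue i
    obtain ⟨w, hw⟩ := huf j
    obtain ⟨-, h | h⟩ := (SimpleGraph.fromRel_adj _ _ _).mp hadj'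
    · rw [hu, hw, B_smul_smul, B_ef, if_neg hij, mul_zero] at h; exact h rfl
    · rw [hw, hu, B_smul_smul, B_fe, if_neg (fun hh => hij hh.symm), mul_zero] at h
      exact h rfl
  -- transfer along τ
  have hzero : ∀ x y : Projectivization F (Fin (2 * ν) → F), x ≠ y → ¬ (SpG F ν).Adj x y →
      (τ x).rep ⬝ᵥ (sK F ν *ᵥ (τ y).rep) = 0 := by
    intro x y hxy hna
    have h2 : ¬ (SpG F ν).Adj (τ x) (τ y) := fun hh => hna (τ.map_rel_iff.mp hh)
    simp only [SpG, SimpleGraph.fromRel_adj, not_and, not_or, not_not] at h2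
    have hne : τ x ≠ τ y := fun hh => hxy (τ.injective hh)
    exact (h2 hne).1
  have hC : ∀ i : Fin ν, c i ≠ 0 := by
    intro i
    have h2 : (SpG F ν).Adj (τ (eP F ν i)) (τ (fP F ν i)) := τ.map_rel_iff.mpr (hadj i)
    obtain ⟨-, h3 | h3⟩ := (SimpleGraph.fromRel_adj _ _ _).mp h2
    · exact h3
    · intro h0
      apply h3
      rw [B_comm]
      have : a i ⬝ᵥ (sK F ν *ᵥ b i) = 0 := h0
      rw [this, neg_zero]
  have haa : ∀ i j : Fin ν, i ≠ j → a i ⬝ᵥ (sK F ν *ᵥ a j) = 0 :=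
    fun i j hij => hzero _ _ (hEE i j hij) (hnEE i j hij)
  have hbb : ∀ i j : Fin ν, i ≠ j → b i ⬝ᵥ (sK F ν *ᵥ b j) = 0 :=
    fun i j hij => hzero _ _ (hFF i j hij) (hnFF i j hij)
  have hab : ∀ i j : Fin ν, i ≠ j → a i ⬝ᵥ (sK F ν *ᵥ b j) = 0 :=
    fun i j hij => hzero _ _ (hEF i j) (hnEF i j hij)
  have hba : ∀ i j : Fin ν, i ≠ j → b i ⬝ᵥ (sK F ν *ᵥ a j) = 0 := by
    intro i j hij
    exact hzero _ _ (hEF j i).symm (fun h => hnEF j i (fun hh => hij hh.symm) h.symm)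
  -- the symplectic matrix
  set T : Matrix (Fin (2 * ν)) (Fin (2 * ν)) F := Matrix.of fun r s =>
    if r.val % 2 = 0 then a ⟨r.val / 2, by have := r.isLt; omega⟩ s
    else (c ⟨r.val / 2, by have := r.isLt; omega⟩)⁻¹ * b ⟨r.val / 2, by have := r.isLt; omega⟩ s
    with hT_def
  have hrow_even : ∀ (r : Fin (2 * ν)) (h : r.val % 2 = 0),
      (fun s => T r s) = a ⟨r.val / 2, by have := r.isLt; omega⟩ := by
    intro r h
    funext s
    simp only [hT_def, Matrix.of_apply, if_pos h]
  have hrow_odd : ∀ (r : Fin (2 * ν)) (h : r.val % 2 = 1),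
      (fun s => T r s) = (c ⟨r.val / 2, by have := r.isLt; omega⟩)⁻¹ •
        b ⟨r.val / 2, by have := r.isLt; omega⟩ := by
    intro r h
    funext s
    simp only [hT_def, Matrix.of_apply, if_neg (by omega : ¬ r.val % 2 = 0), Pi.smul_apply,
      smul_eq_mul]
  have hsymp : T * sK F ν * Tᵀ = sK F ν := by
    ext r s
    rw [mul_mul_transpose_apply]
    by_cases hrs : r = s
    · subst hrs
      rw [B_self, sK_self]
    · rcases Nat.mod_two_eq_zero_or_one r.val with hr | hr <;>
        rcases Nat.mod_two_eq_zero_or_one s.val with hs | hs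
      · -- even, even; r ≠ s so indices differ
        rw [hrow_even r hr, hrow_even s hs, haa _ _
          (by intro hh; have := congrArg Fin.val hh; simp only [Fin.val_mk] at this;
              exact hrs (Fin.ext (by omega)))]
        rw [sK_apply_eq_zero (by
          intro hh; have := congrArg Fin.val hh
          rw [ptn_val_even hr] at this; omega)]
      · -- even, odd
        rw [hrow_even r hr, hrow_odd s hs, B_smul_right]
        by_cases hij : s.val = r.val + 1
        · have hidx : (⟨s.val / 2, by have := s.isLt; omega⟩ : Fin ν) =
              (⟨r.val / 2, by have := r.isLt; omega⟩ : Fin ν) := Fin.ext (by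
            simp only [Fin.val_mk]; omega)
          rw [hidx, inv_mul_cancel₀ (hC _)]
          have hps : s = ptn r := Fin.ext (by rw [ptn_val_even hr]; omega)
          rw [hps, sK_apply_ptn_even hr]
        · rw [hab _ _ (by
            intro hh; have := congrArg Fin.val hh; simp only [Fin.val_mk] at this; omega),
            mul_zero]
          rw [sK_apply_eq_zero (by
            intro hh; have := congrArg Fin.val hh
            rw [ptn_val_even hr] at this; omega)]
      · -- odd, even
        rw [hrow_odd r hr, hrow_even s hs, smul_dotProduct, smul_eq_mul]
        by_cases hij : r.val = s.val + 1
        · have hidx : (⟨r.val / 2, by have := r.isLt; omega⟩ : Fin ν) =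
              (⟨s.val / 2, by have := s.isLt; omega⟩ : Fin ν) := Fin.ext (by
            simp only [Fin.val_mk]; omega)
          have hba' : b ⟨r.val / 2, by have := r.isLt; omega⟩ ⬝ᵥ
              (sK F ν *ᵥ a ⟨s.val / 2, by have := s.isLt; omega⟩) = -(c ⟨r.val / 2, by
                have := r.isLt; omega⟩) := by
            rw [B_comm, hidx]
          rw [hba', mul_neg, inv_mul_cancel₀ (hC _)]
          have hps : s = ptn r := Fin.ext (by rw [ptn_val_odd hr]; omega)
          rw [hps, sK_apply_ptn_odd hr]
        · rw [hba _ _ (by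
            intro hh; have := congrArg Fin.val hh; simp only [Fin.val_mk] at this; omega),
            mul_zero]
          rw [sK_apply_eq_zero (by
            intro hh; have := congrArg Fin.val hh
            rw [ptn_val_odd hr] at this; omega)]
      · -- odd, odd
        rw [hrow_odd r hr, hrow_odd s hs, B_smul_right, smul_dotProduct, smul_eq_mul]
        rw [hbb _ _ (by
          intro hh; have := congrArg Fin.val hh; simp only [Fin.val_mk] at this
          exact hrs (Fin.ext (by omega)))]
        rw [mul_zero, mul_zero]
        rw [sK_apply_eq_zero (by
          intro hh; have := congrArg Fin.val hh
          rw [ptn_val_odd hr] at this; omega)]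
  have hTu : IsUnit T := by
    apply (Matrix.isUnit_iff_isUnit_det T).mpr (Matrix.isUnit_det_of_right_inverse (B := sK F ν * Tᵀ * (sK F ν)ᵀ) ?_)
    rw [← Matrix.mul_assoc, ← Matrix.mul_assoc, hsymp, sK_mul_transpose]
  -- rows of T hit a i and b i
  have hrowT_e : ∀ i : Fin ν, eVec F ν i ᵥ* T = a i := by
    intro i
    rw [eVec, Matrix.single_one_vecMul]
    have h0 : (⟨2 * i.val, by have := i.isLt; omega⟩ : Fin (2 * ν)).val % 2 = 0 := by
      simp only [Fin.val_mk]; omega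
    have := hrow_even _ h0
    rw [show (T.row ⟨2 * i.val, by have := i.isLt; omega⟩ : Fin (2 * ν) → F) =
      (fun s => T ⟨2 * i.val, by have := i.isLt; omega⟩ s) from rfl, this]
    apply congrArg
    apply Fin.ext
    simp only [Fin.val_mk]
    omega
  have hrowT_f : ∀ i : Fin ν, fVec F ν i ᵥ* T = (c i)⁻¹ • b i := by
    intro i
    rw [fVec, Matrix.single_one_vecMul]
    have h0 : (⟨2 * i.val + 1, by have := i.isLt; omega⟩ : Fin (2 * ν)).val % 2 = 1 := by
      simp only [Fin.val_mk]; omega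
    have := hrow_odd _ h0
    rw [show (T.row ⟨2 * i.val + 1, by have := i.isLt; omega⟩ : Fin (2 * ν) → F) =
      (fun s => T ⟨2 * i.val + 1, by have := i.isLt; omega⟩ s) from rfl, this]
    have hidx : (⟨(2 * i.val + 1) / 2, by have := i.isLt; omega⟩ : Fin ν) = i :=
      Fin.ext (by simp only [Fin.val_mk]; omega)
    rw [hidx]
  -- assemble
  refine ⟨sigmaIso T hTu hsymp, τ.trans (sigmaIso T hTu hsymp).symm,
    ⟨T, hTu, hsymp, fun x => sigmaIso_apply T hTu hsymp x⟩, ?_, ?_⟩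
  · intro i
    have hσe : sigmaIso T hTu hsymp (eP F ν i) = τ (eP F ν i) := by
      rw [sigmaIso_apply]
      conv_rhs => rw [← Projectivization.mk_rep (τ (eP F ν i))]
      obtain ⟨u, hu⟩ := hue i
      apply (Projectivization.mk_eq_mk_iff F _ _ _ _).mpr
      refine ⟨u, ?_⟩
      rw [hu, Matrix.smul_vecMul, hrowT_e i]
      rfl
    have hσf : sigmaIso T hTu hsymp (fP F ν i) = τ (fP F ν i) := by
      rw [sigmaIso_apply]
      conv_rhs => rw [← Projectivization.mk_rep (τ (fP F ν i))]
      obtain ⟨w, hw⟩ := huf i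
      have hcu : (c i)⁻¹ ≠ 0 := inv_ne_zero (hC i)
      refine (Projectivization.mk_eq_mk_iff F _ _ _ _).mpr
        ⟨w * Units.mk0 ((c i)⁻¹) hcu, ?_⟩
      rw [hw, Matrix.smul_vecMul, hrowT_f i]
      show ((w : F) * (c i)⁻¹) • b i = (w : F) • ((c i)⁻¹ • b i)
      rw [smul_smul]
    constructor
    · show (sigmaIso T hTu hsymp).symm (τ (eP F ν i)) = eP F ν i
      rw [← hσe]
      exact (sigmaIso T hTu hsymp).symm_apply_apply _
    · show (sigmaIso T hTu hsymp).symm (τ (fP F ν i)) = fP F ν i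
      rw [← hσf]
      exact (sigmaIso T hTu hsymp).symm_apply_apply _
  · intro x
    show τ x = sigmaIso T hTu hsymp ((sigmaIso T hTu hsymp).symm (τ x))
    exact ((sigmaIso T hTu hsymp).apply_symm_apply (τ x)).symm
end

section
/- Let q > 2 and ν > 1, let e_1, f_1, …, e_ν, f_ν denote the standard basis vectors of F_q^{(2ν)} (in this order), and let E be the subgroup of Aut(Sp(2ν,q)) consisting of those automorphisms σ with σ([e_i]) = [e_i] and σ([f_i]) = [f_i] for i = 1, …, ν. Then E is isomorphic to the semidirect product (F_q^* × ⋯ × F_q^*) ⋊_φ Aut(F_q), with ν factors F_q^*, where φ is the coordinatewise action φ(π)(k_1,…,k_ν) = (π(k_1),…,π(k_ν)) of the field automorphism group Aut(F_q) on (F_q^*)^ν. -/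
open Matrix

/-- The subgroup `E` of `Aut(Sp(2ν,q))` of automorphisms fixing all the vertices
`[e_i]` and `[f_i]`, realized inside the permutation group of the vertices. -/
def Efix (F : Type) [Field F] (ν : ℕ) :
    Subgroup (Equiv.Perm (Projectivization F (Fin (2 * ν) → F))) where
  carrier := {σ | (∀ x y, (SpG F ν).Adj (σ x) (σ y) ↔ (SpG F ν).Adj x y) ∧
    ∀ i : Fin ν, σ (eP F ν i) = eP F ν i ∧ σ (fP F ν i) = fP F ν i}
  one_mem' := ⟨fun _ _ => Iff.rfl, fun _ => ⟨rfl, rfl⟩⟩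
  mul_mem' := by
    intro a b ha hb
    refine ⟨?_, ?_⟩
    · intro x y
      simpa [Equiv.Perm.mul_apply] using (ha.1 (b x) (b y)).trans (hb.1 x y)
    · intro i
      simp [Equiv.Perm.mul_apply, (hb.2 i).1, (hb.2 i).2, (ha.2 i).1, (ha.2 i).2]
  inv_mem' := by
    intro a ha
    refine ⟨?_, fun i => ⟨?_, ?_⟩⟩
    · intro x y
      rw [← ha.1 (a⁻¹ x) (a⁻¹ y)]
      simp
    · nth_rewrite 1 [← (ha.2 i).1]
      simp
    · nth_rewrite 1 [← (ha.2 i).2]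
      simp

/-- The coordinatewise action of the field automorphism group `Aut(F_q)` on
`F_q^* × ⋯ × F_q^*` (`ν` factors). -/
def phiAct (F : Type) [Field F] (ν : ℕ) : RingAut F →* MulAut (Fin ν → Fˣ) where
  toFun π := MulEquiv.piCongrRight fun _ => Units.mapEquiv π.toMulEquiv
  map_one' := by
    ext k i
    rfl
  map_mul' := by
    intro π₁ π₂
    ext k i
    rfl


section Development
open Projectivization

variable {F : Type} [Field F] {ν : ℕ}

/-- partner index -/
def pJ (ν : ℕ) (j : Fin (2*ν)) : Fin (2*ν) :=
  ⟨if j.1 % 2 = 0 then j.1 + 1 else j.1 - 1, by have := j.2; split <;> omega⟩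

def epsv (F : Type) [Field F] {ν : ℕ} (j : Fin (2*ν)) : F :=
  if j.1 % 2 = 0 then 1 else -1

lemma pJ_pJ (j : Fin (2*ν)) : pJ ν (pJ ν j) = j := by
  rcases j with ⟨v, hv⟩
  simp only [pJ, Fin.mk.injEq]
  split <;> split <;> omega

lemma pJ_ne (j : Fin (2*ν)) : pJ ν j ≠ j := by
  rcases j with ⟨v, hv⟩
  simp only [pJ, Ne, Fin.mk.injEq]
  split <;> omega

lemma pJ_inj {i j : Fin (2*ν)} (h : pJ ν i = pJ ν j) : i = j := by
  have := congrArg (pJ ν) h; rwa [pJ_pJ, pJ_pJ] at this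

lemma pJ_eq_iff {i j : Fin (2*ν)} : pJ ν i = j ↔ i = pJ ν j := by
  constructor
  · rintro rfl; rw [pJ_pJ]
  · rintro rfl; rw [pJ_pJ]

lemma epsv_pJ (j : Fin (2*ν)) : epsv F (pJ ν j) = - epsv F j := by
  rcases j with ⟨v, hv⟩
  show (if (if v % 2 = 0 then v + 1 else v - 1) % 2 = 0 then (1:F) else -1)
      = -(if v % 2 = 0 then (1:F) else -1)
  by_cases h : v % 2 = 0
  · rw [if_pos h, if_pos h, if_neg (show ¬ (v+1) % 2 = 0 by omega)]
    all_goals norm_num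
  · rw [if_neg h, if_neg h, if_pos (show (v-1) % 2 = 0 by omega)]
    all_goals norm_num

lemma epsv_sq (j : Fin (2*ν)) : epsv F j * epsv F j = 1 := by
  unfold epsv; split <;> ring

lemma epsv_cases (j : Fin (2*ν)) : epsv F j = 1 ∨ epsv F j = -1 := by
  unfold epsv; split <;> simp

lemma epsv_ne_zero (j : Fin (2*ν)) : epsv F j ≠ 0 := by
  intro h
  have := epsv_sq (F := F) j
  rw [h] at this; simp at this

/-- the symplectic form -/
def Bf (F : Type) [Field F] {ν : ℕ} (x y : Fin (2*ν) → F) : F :=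
  ∑ j, epsv F j * x j * y (pJ ν j)

lemma sK_apply_eq (a b : Fin (2*ν)) :
    sK F ν a b = if b = pJ ν a then epsv F a else 0 := by
  rcases a with ⟨av, ha⟩; rcases b with ⟨bv, hb⟩
  have hL : sK F ν ⟨av, ha⟩ ⟨bv, hb⟩ =
      if av % 2 = 0 ∧ bv = av + 1 then (1:F)
      else if bv % 2 = 0 ∧ av = bv + 1 then (-1:F) else 0 := rfl
  have hR : (⟨bv, hb⟩ : Fin (2*ν)) = pJ ν ⟨av, ha⟩ ↔
      bv = (if av % 2 = 0 then av + 1 else av - 1) := by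
    rw [Fin.ext_iff]
    exact Iff.rfl
  by_cases h1 : av % 2 = 0
  · by_cases h2 : bv = av + 1
    · have e3 : (⟨bv, hb⟩ : Fin (2*ν)) = pJ ν ⟨av, ha⟩ := hR.2 (by rw [if_pos h1]; exact h2)
      rw [hL, if_pos ⟨h1, h2⟩, if_pos e3]
      show (1:F) = epsv F _
      unfold epsv; rw [if_pos h1]
    · have e3 : ¬ (⟨bv, hb⟩ : Fin (2*ν)) = pJ ν ⟨av, ha⟩ := fun hc => by
        have := hR.1 hc; rw [if_pos h1] at this; exact h2 this
      rw [hL, if_neg (fun hc => h2 hc.2),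
        if_neg (show ¬(bv % 2 = 0 ∧ av = bv + 1) by omega), if_neg e3]
  · by_cases h2 : bv = av - 1
    · have e3 : (⟨bv, hb⟩ : Fin (2*ν)) = pJ ν ⟨av, ha⟩ := hR.2 (by rw [if_neg h1]; exact h2)
      rw [hL, if_neg (show ¬(av % 2 = 0 ∧ bv = av + 1) by omega),
        if_pos (show bv % 2 = 0 ∧ av = bv + 1 by omega), if_pos e3]
      show (-1:F) = epsv F _
      unfold epsv; rw [if_neg h1]
    · have e3 : ¬ (⟨bv, hb⟩ : Fin (2*ν)) = pJ ν ⟨av, ha⟩ := fun hc => by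
        have := hR.1 hc; rw [if_neg h1] at this; exact h2 this
      rw [hL, if_neg (show ¬(av % 2 = 0 ∧ bv = av + 1) by omega),
        if_neg (show ¬(bv % 2 = 0 ∧ av = bv + 1) by omega), if_neg e3]

lemma Bf_eq_dot (x y : Fin (2*ν) → F) : x ⬝ᵥ (sK F ν *ᵥ y) = Bf F x y := by
  unfold Bf dotProduct mulVec
  refine Finset.sum_congr rfl fun a _ => ?_
  have : (sK F ν a ⬝ᵥ y) = epsv F a * y (pJ ν a) := by
    unfold dotProduct
    rw [show (∑ b, sK F ν a b * y b) = ∑ b, (if b = pJ ν a then epsv F a * y b else 0) from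
      Finset.sum_congr rfl fun b _ => by rw [sK_apply_eq]; split_ifs <;> [rfl; rw [zero_mul]]]
    rw [Finset.sum_ite_eq' Finset.univ (pJ ν a) (fun b => epsv F a * y b),
      if_pos (Finset.mem_univ _)]
  rw [this]; ring

lemma Bf_add_left (x x' y : Fin (2*ν) → F) : Bf F (x + x') y = Bf F x y + Bf F x' y := by
  unfold Bf; rw [← Finset.sum_add_distrib]
  exact Finset.sum_congr rfl fun j _ => by simp [Pi.add_apply]; ring

lemma Bf_add_right (x y y' : Fin (2*ν) → F) : Bf F x (y + y') = Bf F x y + Bf F x y' := by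
  unfold Bf; rw [← Finset.sum_add_distrib]
  exact Finset.sum_congr rfl fun j _ => by simp [Pi.add_apply]; ring

lemma Bf_smul_left (c : F) (x y : Fin (2*ν) → F) : Bf F (c • x) y = c * Bf F x y := by
  unfold Bf; rw [Finset.mul_sum]
  exact Finset.sum_congr rfl fun j _ => by simp [Pi.smul_apply, smul_eq_mul]; ring

lemma Bf_smul_right (c : F) (x y : Fin (2*ν) → F) : Bf F x (c • y) = c * Bf F x y := by
  unfold Bf; rw [Finset.mul_sum]
  exact Finset.sum_congr rfl fun j _ => by simp [Pi.smul_apply, smul_eq_mul]; ring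

lemma Bf_single_left (a : Fin (2*ν)) (c : F) (y : Fin (2*ν) → F) :
    Bf F (Pi.single a c) y = epsv F a * c * y (pJ ν a) := by
  unfold Bf
  rw [Finset.sum_eq_single a]
  · rw [Pi.single_eq_same]
  · intro b _ hb
    rw [Pi.single_eq_of_ne hb, mul_zero, zero_mul]
  · intro h; exact absurd (Finset.mem_univ a) h

lemma Bf_single_right (b : Fin (2*ν)) (c : F) (x : Fin (2*ν) → F) :
    Bf F x (Pi.single b c) = epsv F (pJ ν b) * x (pJ ν b) * c := by
  unfold Bf
  rw [Finset.sum_eq_single (pJ ν b)]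
  · rw [pJ_pJ, Pi.single_eq_same]
  · intro j _ hj
    rw [Pi.single_eq_of_ne (fun hc => hj (by rw [← hc, pJ_pJ])), mul_zero]
  · intro h; exact absurd (Finset.mem_univ _) h

lemma Bf_single_single (a b : Fin (2*ν)) (s t : F) :
    Bf F (Pi.single a s) (Pi.single b t) = if b = pJ ν a then epsv F a * s * t else 0 := by
  rw [Bf_single_left]
  split_ifs with h
  · rw [h, Pi.single_eq_same]
  · rw [Pi.single_eq_of_ne (fun hc => h hc.symm), mul_zero]

lemma Bf_self (x : Fin (2*ν) → F) : Bf F x x = 0 := by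
  unfold Bf
  refine Finset.sum_ninvolution (pJ ν) (fun j => ?_) (fun j _ => pJ_ne j)
    (fun j => Finset.mem_univ _) pJ_pJ
  rw [pJ_pJ, epsv_pJ]; ring

lemma Bf_antisymm (x y : Fin (2*ν) → F) : Bf F y x = - Bf F x y := by
  unfold Bf
  rw [← Equiv.sum_comp (Function.Involutive.toPerm (pJ ν) pJ_pJ)
    (fun j => epsv F j * y j * x (pJ ν j)), ← Finset.sum_neg_distrib]
  refine Finset.sum_congr rfl fun j _ => ?_
  show epsv F (pJ ν j) * y (pJ ν j) * x (pJ ν (pJ ν j)) = _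
  rw [pJ_pJ, epsv_pJ]; ring

lemma adj_iff_rep {p q : Projectivization F (Fin (2*ν) → F)} :
    (SpG F ν).Adj p q ↔ Bf F p.rep q.rep ≠ 0 := by
  rw [SpG, SimpleGraph.fromRel_adj]
  constructor
  · rintro ⟨hne, h | h⟩
    · rwa [Bf_eq_dot] at h
    · rw [Bf_eq_dot] at h
      rw [Bf_antisymm] at h
      simpa using h
  · intro h
    refine ⟨fun he => ?_, Or.inl (by rwa [Bf_eq_dot])⟩
    subst he
    exact h (Bf_self _)

lemma adj_mk_iff (x y : Fin (2*ν) → F) (hx : x ≠ 0) (hy : y ≠ 0) :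
    (SpG F ν).Adj (Projectivization.mk F x hx) (Projectivization.mk F y hy) ↔ Bf F x y ≠ 0 := by
  obtain ⟨u, hu⟩ := Projectivization.exists_smul_eq_mk_rep F x hx
  obtain ⟨v, hv⟩ := Projectivization.exists_smul_eq_mk_rep F y hy
  rw [adj_iff_rep, ← hu, ← hv]
  rw [Units.smul_def, Units.smul_def, Bf_smul_left, Bf_smul_right]
  simp [Units.ne_zero]

/-- basis point -/
noncomputable def bP (F : Type) [Field F] (ν : ℕ) (j : Fin (2*ν)) :
    Projectivization F (Fin (2*ν) → F) :=
  Projectivization.mk F (Pi.single j 1) (by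
    intro h
    have := congrFun h j
    rw [Pi.single_eq_same] at this
    simp at this)

lemma efix_adj {σ : Equiv.Perm (Projectivization F (Fin (2*ν) → F))} (hσ : σ ∈ Efix F ν)
    (p q : Projectivization F (Fin (2*ν) → F)) :
    (SpG F ν).Adj (σ p) (σ q) ↔ (SpG F ν).Adj p q := hσ.1 p q

lemma efix_fixes_bP {σ : Equiv.Perm (Projectivization F (Fin (2*ν) → F))} (hσ : σ ∈ Efix F ν)
    (j : Fin (2*ν)) : σ (bP F ν j) = bP F ν j := by
  have hj := j.2
  by_cases h : j.1 % 2 = 0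
  · have : bP F ν j = eP F ν ⟨j.1 / 2, by omega⟩ := by
      unfold bP eP
      rw [Projectivization.mk_eq_mk_iff']
      refine ⟨1, ?_⟩
      rw [one_smul]
      unfold eVec
      exact congrArg (fun a => Pi.single a (1:F)) (Fin.ext (show 2*(j.1/2) = j.1 by omega))
    rw [this]
    exact (hσ.2 ⟨j.1 / 2, by omega⟩).1
  · have : bP F ν j = fP F ν ⟨j.1 / 2, by omega⟩ := by
      unfold bP fP
      rw [Projectivization.mk_eq_mk_iff']
      refine ⟨1, ?_⟩
      rw [one_smul]
      unfold fVec
      exact congrArg (fun a => Pi.single a (1:F)) (Fin.ext (show 2*(j.1/2)+1 = j.1 by omega))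
    rw [this]
    exact (hσ.2 ⟨j.1 / 2, by omega⟩).2

lemma adj_bP_iff (p : Projectivization F (Fin (2*ν) → F)) (j : Fin (2*ν)) :
    (SpG F ν).Adj p (bP F ν j) ↔ p.rep (pJ ν j) ≠ 0 := by
  unfold bP
  conv_lhs => rw [← Projectivization.mk_rep p]
  rw [adj_mk_iff, Bf_single_right, mul_one]
  constructor
  · intro h hc; exact h (by rw [hc, mul_zero])
  · intro h
    exact mul_ne_zero (epsv_ne_zero _) h

lemma efix_supp {σ : Equiv.Perm (Projectivization F (Fin (2*ν) → F))} (hσ : σ ∈ Efix F ν)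
    (p : Projectivization F (Fin (2*ν) → F)) (j : Fin (2*ν)) :
    (σ p).rep j = 0 ↔ p.rep j = 0 := by
  have h1 := adj_bP_iff (σ p) (pJ ν j)
  have h2 := adj_bP_iff p (pJ ν j)
  rw [pJ_pJ] at h1 h2
  have h3 := efix_adj hσ p (bP F ν (pJ ν j))
  rw [efix_fixes_bP hσ] at h3
  rw [h1] at h3
  rw [h2] at h3
  simpa [not_not] using not_iff_not.mpr h3

/-- two-coordinate vector -/
def v2 (F : Type) [Field F] {ν : ℕ} (a b : Fin (2*ν)) (t : F) : Fin (2*ν) → F :=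
  Pi.single a 1 + t • (Pi.single b 1 : Fin (2*ν) → F)

/-- three-coordinate vector -/
def v3 (F : Type) [Field F] {ν : ℕ} (a b c : Fin (2*ν)) (s x : F) : Fin (2*ν) → F :=
  v2 F a b s + x • (Pi.single c 1 : Fin (2*ν) → F)

lemma v3_zero (a b c : Fin (2*ν)) (s : F) : v3 F a b c s 0 = v2 F a b s := by
  unfold v3; rw [zero_smul, add_zero]

lemma v2_apply_a {a b : Fin (2*ν)} (hab : a ≠ b) (t : F) : v2 F a b t a = 1 := by
  unfold v2
  rw [Pi.add_apply, Pi.smul_apply, Pi.single_eq_same, Pi.single_eq_of_ne hab]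
  simp

lemma v2_apply_b {a b : Fin (2*ν)} (hab : a ≠ b) (t : F) : v2 F a b t b = t := by
  unfold v2
  rw [Pi.add_apply, Pi.smul_apply, Pi.single_eq_same, Pi.single_eq_of_ne (Ne.symm hab)]
  simp

lemma v2_apply_other {a b j : Fin (2*ν)} (hja : j ≠ a) (hjb : j ≠ b) (t : F) : v2 F a b t j = 0 := by
  unfold v2
  rw [Pi.add_apply, Pi.smul_apply, Pi.single_eq_of_ne hja, Pi.single_eq_of_ne hjb]
  simp

lemma v2_ne_zero {a b : Fin (2*ν)} (hab : a ≠ b) (t : F) : v2 F a b t ≠ 0 := by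
  intro h
  have := congrFun h a
  rw [v2_apply_a hab] at this
  simp at this

lemma v3_apply_a {a b c : Fin (2*ν)} (hab : a ≠ b) (hac : a ≠ c) (s x : F) :
    v3 F a b c s x a = 1 := by
  unfold v3
  rw [Pi.add_apply, Pi.smul_apply, Pi.single_eq_of_ne hac, v2_apply_a hab]
  simp

lemma v3_apply_b {a b c : Fin (2*ν)} (hab : a ≠ b) (hbc : b ≠ c) (s x : F) :
    v3 F a b c s x b = s := by
  unfold v3
  rw [Pi.add_apply, Pi.smul_apply, Pi.single_eq_of_ne hbc, v2_apply_b hab]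
  simp

lemma v3_apply_c {a b c : Fin (2*ν)} (hac : a ≠ c) (hbc : b ≠ c) (s x : F) :
    v3 F a b c s x c = x := by
  unfold v3
  rw [Pi.add_apply, Pi.smul_apply, Pi.single_eq_same,
    v2_apply_other (Ne.symm hac) (Ne.symm hbc)]
  simp

lemma v3_apply_other {a b c j : Fin (2*ν)} (hja : j ≠ a) (hjb : j ≠ b) (hjc : j ≠ c) (s x : F) :
    v3 F a b c s x j = 0 := by
  unfold v3
  rw [Pi.add_apply, Pi.smul_apply, Pi.single_eq_of_ne hjc, v2_apply_other hja hjb]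
  simp

lemma v3_ne_zero {a b c : Fin (2*ν)} (hab : a ≠ b) (hac : a ≠ c) (s x : F) :
    v3 F a b c s x ≠ 0 := by
  intro h
  have := congrFun h a
  rw [v3_apply_a hab hac] at this
  simp at this

lemma v3_swap {a b c : Fin (2*ν)} (s x : F) : v3 F a b c s x = v3 F a c b x s := by
  unfold v3 v2; abel

lemma mk_v2_inj {a b : Fin (2*ν)} (hab : a ≠ b) {t t' : F}
    (h : Projectivization.mk F (v2 F a b t) (v2_ne_zero hab t)
       = Projectivization.mk F (v2 F a b t') (v2_ne_zero hab t')) : t = t' := by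
  rw [Projectivization.mk_eq_mk_iff'] at h
  obtain ⟨u, hu⟩ := h
  have h1 := congrFun hu a
  have h2 := congrFun hu b
  rw [Pi.smul_apply, v2_apply_a hab, v2_apply_a hab, smul_eq_mul, mul_one] at h1
  rw [Pi.smul_apply, v2_apply_b hab, v2_apply_b hab, smul_eq_mul] at h2
  rw [h1, one_mul] at h2
  exact h2.symm

/-- normalization: a point supported in `{a,b}` with nonzero `a`-coordinate -/
lemma norm2 {p : Projectivization F (Fin (2*ν) → F)} {a b : Fin (2*ν)} (hab : a ≠ b)
    (hsupp : ∀ j, j ≠ a → j ≠ b → p.rep j = 0) (ha : p.rep a ≠ 0) :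
    p = Projectivization.mk F (v2 F a b (p.rep b / p.rep a)) (v2_ne_zero hab _) := by
  conv_lhs => rw [← Projectivization.mk_rep p]
  rw [Projectivization.mk_eq_mk_iff']
  refine ⟨p.rep a, funext fun j => ?_⟩
  rw [Pi.smul_apply, smul_eq_mul]
  by_cases hja : j = a
  · subst hja; rw [v2_apply_a hab, mul_one]
  · by_cases hjb : j = b
    · subst hjb; rw [v2_apply_b hab, mul_div_cancel₀ _ ha]
    · rw [v2_apply_other hja hjb, mul_zero, hsupp j hja hjb]

lemma norm3 {p : Projectivization F (Fin (2*ν) → F)} {a b c : Fin (2*ν)} (hab : a ≠ b)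
    (hac : a ≠ c) (hbc : b ≠ c)
    (hsupp : ∀ j, j ≠ a → j ≠ b → j ≠ c → p.rep j = 0) (ha : p.rep a ≠ 0) :
    p = Projectivization.mk F (v3 F a b c (p.rep b / p.rep a) (p.rep c / p.rep a))
      (v3_ne_zero hab hac _ _) := by
  conv_lhs => rw [← Projectivization.mk_rep p]
  rw [Projectivization.mk_eq_mk_iff']
  refine ⟨p.rep a, funext fun j => ?_⟩
  rw [Pi.smul_apply, smul_eq_mul]
  by_cases hja : j = a
  · subst hja; rw [v3_apply_a hab hac, mul_one]
  · by_cases hjb : j = b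
    · subst hjb; rw [v3_apply_b hab hbc, mul_div_cancel₀ _ ha]
    · by_cases hjc : j = c
      · subst hjc; rw [v3_apply_c hac hbc, mul_div_cancel₀ _ ha]
      · rw [v3_apply_other hja hjb hjc, mul_zero, hsupp j hja hjb hjc]

lemma Bf_v2_left (a b : Fin (2*ν)) (t : F) (y : Fin (2*ν) → F) :
    Bf F (v2 F a b t) y = epsv F a * y (pJ ν a) + t * (epsv F b * y (pJ ν b)) := by
  unfold v2
  rw [Bf_add_left, Bf_smul_left, Bf_single_left, Bf_single_left]
  ring

lemma Bf_v3_left (a b c : Fin (2*ν)) (s x : F) (y : Fin (2*ν) → F) :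
    Bf F (v3 F a b c s x) y = epsv F a * y (pJ ν a) + s * (epsv F b * y (pJ ν b))
      + x * (epsv F c * y (pJ ν c)) := by
  unfold v3
  rw [Bf_add_left, Bf_smul_left, Bf_single_left, Bf_v2_left]
  ring

lemma Bf_v2_right (a b : Fin (2*ν)) (t : F) (x : Fin (2*ν) → F) :
    Bf F x (v2 F a b t) = - epsv F a * x (pJ ν a) - t * (epsv F b * x (pJ ν b)) := by
  rw [Bf_antisymm, Bf_v2_left]
  ring

section Gadgets

variable (a c : Fin (2*ν)) (hc1 : c ≠ a) (hc2 : c ≠ pJ ν a)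

include hc1 hc2 in
lemma L1 (s x t : F) :
    Bf F (v3 F a (pJ ν a) c s x) (v2 F a (pJ ν a) t) = epsv F a * (t - s) := by
  have g1 : a ≠ pJ ν a := (pJ_ne a).symm
  have g2 : pJ ν c ≠ a := fun h => hc2 (by rw [← h, pJ_pJ])
  have g3 : pJ ν c ≠ pJ ν a := fun h => hc1 (pJ_inj h)
  rw [Bf_v3_left, pJ_pJ, v2_apply_b g1, v2_apply_a g1, v2_apply_other g2 g3, epsv_pJ]
  ring

lemma L2 (d e : Fin (2*ν)) (hd1 : d ≠ a) (hd2 : d ≠ pJ ν a) (he1 : e ≠ a) (hde : e ≠ d)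
    (s x t : F) :
    Bf F (v3 F a d e s x) (v2 F (pJ ν a) (pJ ν d) t) = epsv F a + epsv F d * s * t := by
  have h1 : pJ ν a ≠ pJ ν d := fun h => hd1 (pJ_inj h).symm
  rw [Bf_v3_left, v2_apply_a h1, v2_apply_b h1,
    v2_apply_other (fun h => he1 (pJ_inj h)) (fun h => hde (pJ_inj h))]
  ring

include hc1 hc2 in
lemma L3 (s x s' y : F) :
    Bf F (v3 F a (pJ ν a) c s x) (v3 F a (pJ ν a) (pJ ν c) s' y)
      = epsv F a * (s' - s) + epsv F c * x * y := by
  have g1 : pJ ν a ≠ a := pJ_ne a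
  have g2 : pJ ν a ≠ pJ ν c := fun h => hc1 (pJ_inj h).symm
  have g3 : a ≠ pJ ν c := fun h => hc2 (by rw [h, pJ_pJ])
  rw [Bf_v3_left, pJ_pJ,
    v3_apply_b (Ne.symm g1) g2,
    v3_apply_a (Ne.symm g1) g3,
    v3_apply_c g3 g2]
  rw [epsv_pJ]
  ring

include hc1 hc2 in
lemma L4 (x y t : F) :
    Bf F (v3 F a c (pJ ν c) x y) (v2 F c (pJ ν c) t) = epsv F c * (x * t - y) := by
  have g1 : pJ ν a ≠ c := fun h => hc2 h.symm
  have g2 : pJ ν a ≠ pJ ν c := fun h => hc1 (pJ_inj h).symm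
  have g4 : c ≠ pJ ν c := (pJ_ne c).symm
  rw [Bf_v3_left, pJ_pJ, v2_apply_other g1 g2, v2_apply_b g4, v2_apply_a g4, epsv_pJ]
  ring

end Gadgets

lemma L5 (a u v : Fin (2*ν)) (hu1 : u ≠ a) (hu2 : u ≠ pJ ν a) (hv1 : v ≠ a) (hv2 : v ≠ pJ ν a)
    (huv : u ≠ v) (t x y : F) :
    Bf F (v2 F u v t) (v3 F a (pJ ν u) (pJ ν v) x y) = epsv F u * x + epsv F v * t * y := by
  have g1 : pJ ν u ≠ a := fun h => hu2 (by rw [← h, pJ_pJ])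
  have g2 : pJ ν v ≠ a := fun h => hv2 (by rw [← h, pJ_pJ])
  have g3 : pJ ν u ≠ pJ ν v := fun h => huv (pJ_inj h)
  rw [Bf_v2_left, v3_apply_b (Ne.symm g1) g3, v3_apply_c (Ne.symm g2) g3]
  ring

lemma rep_mk_smul (x : Fin (2*ν) → F) (hx : x ≠ 0) :
    ∃ u : Fˣ, (Projectivization.mk F x hx).rep = (u:F) • x := by
  obtain ⟨u, hu⟩ := Projectivization.exists_smul_eq_mk_rep F x hx
  exact ⟨u, by rw [← hu]; rfl⟩

lemma mk_eq_of_veq {x y : Fin (2*ν) → F} (hx : x ≠ 0) (hy : y ≠ 0) (h : x = y) :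
    Projectivization.mk F x hx = Projectivization.mk F y hy := by
  subst h; rfl

variable (σ : Equiv.Perm (Projectivization F (Fin (2*ν) → F)))

/-- the parameter of the image of a 2-coordinate point -/
noncomputable def Dm (a b : Fin (2*ν)) (t : F) : F :=
  if hab : a = b then 0 else
    (σ (Projectivization.mk F (v2 F a b t) (v2_ne_zero hab t))).rep b /
    (σ (Projectivization.mk F (v2 F a b t) (v2_ne_zero hab t))).rep a

/-- the parameters of the image of a 3-coordinate point -/
noncomputable def Sm (a b c : Fin (2*ν)) (s x : F) : F :=
  if h : a ≠ b ∧ a ≠ c then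
    (σ (Projectivization.mk F (v3 F a b c s x) (v3_ne_zero h.1 h.2 s x))).rep b /
    (σ (Projectivization.mk F (v3 F a b c s x) (v3_ne_zero h.1 h.2 s x))).rep a
  else 0

noncomputable def Xm (a b c : Fin (2*ν)) (s x : F) : F :=
  if h : a ≠ b ∧ a ≠ c then
    (σ (Projectivization.mk F (v3 F a b c s x) (v3_ne_zero h.1 h.2 s x))).rep c /
    (σ (Projectivization.mk F (v3 F a b c s x) (v3_ne_zero h.1 h.2 s x))).rep a
  else 0

variable {σ}

lemma Xm_eq_Sm_swap {a b c : Fin (2*ν)} (hab : a ≠ b) (hac : a ≠ c) (s x : F) :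
    Xm σ a b c s x = Sm σ a c b x s := by
  have hmk : Projectivization.mk F (v3 F a b c s x) (v3_ne_zero hab hac s x)
      = Projectivization.mk F (v3 F a c b x s) (v3_ne_zero hac hab x s) :=
    mk_eq_of_veq _ _ (v3_swap s x)
  unfold Xm Sm
  rw [dif_pos ⟨hab, hac⟩, dif_pos ⟨hac, hab⟩, hmk]

section SigmaSide

variable (hσ : σ ∈ Efix F ν)

include hσ

lemma sigma_v2 {a b : Fin (2*ν)} (hab : a ≠ b) (t : F) :
    σ (Projectivization.mk F (v2 F a b t) (v2_ne_zero hab t))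
      = Projectivization.mk F (v2 F a b (Dm σ a b t)) (v2_ne_zero hab _) := by
  obtain ⟨u, hu⟩ := rep_mk_smul (v2 F a b t) (v2_ne_zero hab t)
  have hsupp : ∀ j, j ≠ a → j ≠ b →
      (σ (Projectivization.mk F (v2 F a b t) (v2_ne_zero hab t))).rep j = 0 := by
    intro j hja hjb
    rw [efix_supp hσ, hu, Pi.smul_apply, v2_apply_other hja hjb, smul_zero]
  have ha : (σ (Projectivization.mk F (v2 F a b t) (v2_ne_zero hab t))).rep a ≠ 0 := by
    rw [Ne, efix_supp hσ, hu, Pi.smul_apply, v2_apply_a hab, smul_eq_mul, mul_one]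
    exact Units.ne_zero u
  have hD : Dm σ a b t =
      (σ (Projectivization.mk F (v2 F a b t) (v2_ne_zero hab t))).rep b /
      (σ (Projectivization.mk F (v2 F a b t) (v2_ne_zero hab t))).rep a := by
    rw [Dm, dif_neg hab]
  rw [hD]
  exact norm2 hab hsupp ha

lemma sigma_v3 {a b c : Fin (2*ν)} (hab : a ≠ b) (hac : a ≠ c) (hbc : b ≠ c) (s x : F) :
    σ (Projectivization.mk F (v3 F a b c s x) (v3_ne_zero hab hac s x))
      = Projectivization.mk F (v3 F a b c (Sm σ a b c s x) (Xm σ a b c s x))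
          (v3_ne_zero hab hac _ _) := by
  obtain ⟨u, hu⟩ := rep_mk_smul (v3 F a b c s x) (v3_ne_zero hab hac s x)
  have hsupp : ∀ j, j ≠ a → j ≠ b → j ≠ c →
      (σ (Projectivization.mk F (v3 F a b c s x) (v3_ne_zero hab hac s x))).rep j = 0 := by
    intro j hja hjb hjc
    rw [efix_supp hσ, hu, Pi.smul_apply, v3_apply_other hja hjb hjc, smul_zero]
  have ha : (σ (Projectivization.mk F (v3 F a b c s x) (v3_ne_zero hab hac s x))).rep a ≠ 0 := by
    rw [Ne, efix_supp hσ, hu, Pi.smul_apply, v3_apply_a hab hac, smul_eq_mul, mul_one]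
    exact Units.ne_zero u
  have hS : Sm σ a b c s x =
      (σ (Projectivization.mk F (v3 F a b c s x) (v3_ne_zero hab hac s x))).rep b /
      (σ (Projectivization.mk F (v3 F a b c s x) (v3_ne_zero hab hac s x))).rep a := by
    rw [Sm, dif_pos ⟨hab, hac⟩]
  have hX : Xm σ a b c s x =
      (σ (Projectivization.mk F (v3 F a b c s x) (v3_ne_zero hab hac s x))).rep c /
      (σ (Projectivization.mk F (v3 F a b c s x) (v3_ne_zero hab hac s x))).rep a := by
    rw [Xm, dif_pos ⟨hab, hac⟩]
  rw [hS, hX]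
  exact norm3 hab hac hbc hsupp ha

lemma Dm_zero {a b : Fin (2*ν)} (hab : a ≠ b) : Dm σ a b 0 = 0 := by
  have h0 : Projectivization.mk F (v2 F a b 0) (v2_ne_zero hab 0) = bP F ν a := by
    rw [bP, Projectivization.mk_eq_mk_iff']
    exact ⟨1, by rw [one_smul]; unfold v2; rw [zero_smul, add_zero]⟩
  have h := sigma_v2 hσ hab 0
  rw [h0, efix_fixes_bP hσ, ← h0] at h
  exact (mk_v2_inj hab h).symm

lemma Dm_ne_zero {a b : Fin (2*ν)} (hab : a ≠ b) {t : F} (ht : t ≠ 0) : Dm σ a b t ≠ 0 := by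
  have h := sigma_v2 hσ hab t
  obtain ⟨u, hu⟩ := rep_mk_smul (v2 F a b t) (v2_ne_zero hab t)
  obtain ⟨w, hw⟩ := rep_mk_smul (v2 F a b (Dm σ a b t)) (v2_ne_zero hab (Dm σ a b t))
  intro hDz
  have hb : (σ (Projectivization.mk F (v2 F a b t) (v2_ne_zero hab t))).rep b = 0 := by
    rw [h, hw, Pi.smul_apply, v2_apply_b hab, hDz, smul_zero]
  rw [efix_supp hσ, hu, Pi.smul_apply, v2_apply_b hab] at hb
  rcases smul_eq_zero.mp hb with h1 | h1
  · exact Units.ne_zero u h1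
  · exact ht h1

lemma Dm_inj {a b : Fin (2*ν)} (hab : a ≠ b) {t t' : F} (h : Dm σ a b t = Dm σ a b t') :
    t = t' := by
  have h1 := sigma_v2 hσ hab t
  have h2 := sigma_v2 hσ hab t'
  apply mk_v2_inj hab
  apply σ.injective
  rw [h1, h2]
  exact mk_eq_of_veq _ _ (by rw [h])

/-- transfer of orthogonality along σ, for explicitly given mk-points -/
lemma perp_transfer {x y : Fin (2*ν) → F} (hx : x ≠ 0) (hy : y ≠ 0)
    {x' y' : Fin (2*ν) → F} (hx' : x' ≠ 0) (hy' : y' ≠ 0)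
    (hmx : σ (Projectivization.mk F x hx) = Projectivization.mk F x' hx')
    (hmy : σ (Projectivization.mk F y hy) = Projectivization.mk F y' hy')
    (h : Bf F x y = 0) : Bf F x' y' = 0 := by
  have h2 := efix_adj hσ (Projectivization.mk F x hx) (Projectivization.mk F y hy)
  rw [hmx, hmy, adj_mk_iff, adj_mk_iff] at h2
  by_contra hne
  exact (h2.mp hne) h

end SigmaSide

section Detect

variable (hσ : σ ∈ Efix F ν) (a : Fin (2*ν)) (hea : epsv F a = 1)

include hσ

lemma Sm_zero {b c : Fin (2*ν)} (hab : a ≠ b) (hac : a ≠ c) (hbc : b ≠ c) (x : F) :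
    Sm σ a b c 0 x = 0 := by
  have h := sigma_v3 hσ hab hac hbc 0 x
  obtain ⟨u, hu⟩ := rep_mk_smul (v3 F a b c 0 x) (v3_ne_zero hab hac 0 x)
  obtain ⟨w, hw⟩ := rep_mk_smul (v3 F a b c (Sm σ a b c 0 x) (Xm σ a b c 0 x))
    (v3_ne_zero hab hac _ _)
  have hb : (σ (Projectivization.mk F (v3 F a b c 0 x) (v3_ne_zero hab hac 0 x))).rep b = 0 := by
    rw [efix_supp hσ, hu, Pi.smul_apply, v3_apply_b hab hbc, smul_zero]
  rw [h, hw, Pi.smul_apply, v3_apply_b hab hbc] at hb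
  rcases smul_eq_zero.mp hb with h1 | h1
  · exact absurd h1 (Units.ne_zero w)
  · exact h1

lemma Xm_zero {b c : Fin (2*ν)} (hab : a ≠ b) (hac : a ≠ c) (hbc : b ≠ c) (s : F) :
    Xm σ a b c s 0 = 0 := by
  rw [Xm_eq_Sm_swap hab hac]
  exact Sm_zero hσ a hac hab hbc.symm s

include hea

/-- detection of the first coefficient, base family case -/
lemma Sm_base {c : Fin (2*ν)} (hc1 : c ≠ a) (hc2 : c ≠ pJ ν a) (s x : F) :
    Sm σ a (pJ ν a) c s x = Dm σ a (pJ ν a) s := by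
  have hab : a ≠ pJ ν a := (pJ_ne a).symm
  have hac : a ≠ c := hc1.symm
  have hbc : pJ ν a ≠ c := fun h => hc2 h.symm
  have hsrc : Bf F (v3 F a (pJ ν a) c s x) (v2 F a (pJ ν a) s) = 0 := by
    rw [L1 a c hc1 hc2, sub_self, mul_zero]
  have htr := perp_transfer hσ _ _ _ _ (sigma_v3 hσ hab hac hbc s x) (sigma_v2 hσ hab s) hsrc
  rw [L1 a c hc1 hc2, hea, one_mul, sub_eq_zero] at htr
  exact htr.symm

/-- detection of the first coefficient, general case -/
lemma Sm_det {d e : Fin (2*ν)} (hd1 : d ≠ a) (hd2 : d ≠ pJ ν a) (he1 : e ≠ a) (hde : e ≠ d)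
    (s x : F) : Sm σ a d e s x = Dm σ a d s := by
  have had : a ≠ d := hd1.symm
  have hae : a ≠ e := he1.symm
  have hdeq : d ≠ e := hde.symm
  rcases eq_or_ne s 0 with rfl | hs
  · rw [Sm_zero hσ a had hae hdeq, Dm_zero hσ had]
  have hsq := epsv_sq (F := F) d
  have hd0 := epsv_ne_zero (F := F) d
  set t₀ : F := -(epsv F d)/s with ht₀
  have ht₀ne : t₀ ≠ 0 := by
    rw [ht₀, div_ne_zero_iff]
    exact ⟨neg_ne_zero.mpr hd0, hs⟩
  have ha'd' : pJ ν a ≠ pJ ν d := fun h => had (pJ_inj h)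
  have hval : epsv F a + epsv F d * s * t₀ = 0 := by
    rw [hea, ht₀]
    field_simp
    linear_combination (-1) * hsq
  -- the Sm equation
  have hsrc : Bf F (v3 F a d e s x) (v2 F (pJ ν a) (pJ ν d) t₀) = 0 := by
    rw [L2 a d e hd1 hd2 he1 hde s x t₀]; exact hval
  have htr := perp_transfer hσ _ _ _ _ (sigma_v3 hσ had hae hdeq s x)
    (sigma_v2 hσ ha'd' t₀) hsrc
  rw [L2 a d e hd1 hd2 he1 hde] at htr
  -- the Dm equation
  have hv0 : v3 F a d e s 0 = v2 F a d s := v3_zero a d e s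
  have hsrc2 : Bf F (v3 F a d e s 0) (v2 F (pJ ν a) (pJ ν d) t₀) = 0 := by
    rw [L2 a d e hd1 hd2 he1 hde s 0 t₀]; exact hval
  have hmk2 : σ (Projectivization.mk F (v3 F a d e s 0) (v3_ne_zero had hae s 0))
      = Projectivization.mk F (v2 F a d (Dm σ a d s)) (v2_ne_zero had _) := by
    rw [mk_eq_of_veq (v3_ne_zero had hae s 0) (v2_ne_zero had s) hv0]
    exact sigma_v2 hσ had s
  have htr2 := perp_transfer hσ _ _ _ _ hmk2 (sigma_v2 hσ ha'd' t₀) hsrc2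
  rw [← v3_zero a d e (Dm σ a d s), L2 a d e hd1 hd2 he1 hde] at htr2
  -- combine
  have hDD : Dm σ (pJ ν a) (pJ ν d) t₀ ≠ 0 := Dm_ne_zero hσ ha'd' ht₀ne
  have : epsv F d * Sm σ a d e s x * Dm σ (pJ ν a) (pJ ν d) t₀
      = epsv F d * Dm σ a d s * Dm σ (pJ ν a) (pJ ν d) t₀ := by
    linear_combination htr - htr2
  exact mul_left_cancel₀ hd0 (mul_right_cancel₀ hDD this)

/-- detection of the second coefficient -/
lemma Xm_det {d e : Fin (2*ν)} (he1 : e ≠ a) (he2 : e ≠ pJ ν a) (hd1 : d ≠ a) (hde : d ≠ e)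
    (s x : F) : Xm σ a d e s x = Dm σ a e x := by
  rw [Xm_eq_Sm_swap hd1.symm he1.symm]
  exact Sm_det hσ a hea he1 he2 hd1 hde x s

/-- the master additive/multiplicative relation -/
lemma funeq {c : Fin (2*ν)} (hc1 : c ≠ a) (hc2 : c ≠ pJ ν a) (s x y : F)
    (hx : x ≠ 0) (hy : y ≠ 0) :
    Dm σ a (pJ ν a) (s - epsv F c * x * y)
      = Dm σ a (pJ ν a) s - epsv F c * Dm σ a c x * Dm σ a (pJ ν c) y := by
  have hab : a ≠ pJ ν a := (pJ_ne a).symm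
  have hac : a ≠ c := hc1.symm
  have hbc : pJ ν a ≠ c := fun h => hc2 h.symm
  have hac' : a ≠ pJ ν c := fun h => hc2 (by rw [← pJ_pJ c, ← h])
  have hbc' : pJ ν a ≠ pJ ν c := fun h => hc1 (pJ_inj h).symm
  have hsrc : Bf F (v3 F a (pJ ν a) c s x)
      (v3 F a (pJ ν a) (pJ ν c) (s - epsv F c * x * y) y) = 0 := by
    rw [L3 a c hc1 hc2, hea]; ring
  have htr := perp_transfer hσ _ _ _ _ (sigma_v3 hσ hab hac hbc s x)
    (sigma_v3 hσ hab hac' hbc' (s - epsv F c * x * y) y) hsrc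
  rw [L3 a c hc1 hc2, hea, one_mul] at htr
  rw [Sm_base hσ a hea hc1 hc2 s x,
    Sm_base hσ a hea (fun h => hac' h.symm) hbc'.symm (s - epsv F c * x * y) y,
    Xm_det hσ a hea hc1 hc2 (pJ_ne a) hbc s x,
    Xm_det hσ a hea (fun h => hac' h.symm) hbc'.symm (pJ_ne a) hbc' (s - epsv F c * x * y) y]
    at htr
  linear_combination htr

/-- relation for the within-block family at `c` -/
lemma Dm_block {c : Fin (2*ν)} (hc1 : c ≠ a) (hc2 : c ≠ pJ ν a) (x t : F)
    (hx : x ≠ 0) (ht : t ≠ 0) :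
    Dm σ a (pJ ν c) (x*t) = Dm σ a c x * Dm σ c (pJ ν c) t := by
  have hac : a ≠ c := hc1.symm
  have hac' : a ≠ pJ ν c := fun h => hc2 (by rw [← pJ_pJ c, ← h])
  have hcc' : c ≠ pJ ν c := (pJ_ne c).symm
  have hc'a : pJ ν c ≠ a := fun h => hac' h.symm
  have hc'a' : pJ ν c ≠ pJ ν a := fun h => hc1 (pJ_inj h)
  have hsrc : Bf F (v3 F a c (pJ ν c) x (x*t)) (v2 F c (pJ ν c) t) = 0 := by
    rw [L4 a c hc1 hc2]; ring
  have htr := perp_transfer hσ _ _ _ _ (sigma_v3 hσ hac hac' hcc' x (x*t))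
    (sigma_v2 hσ hcc' t) hsrc
  rw [L4 a c hc1 hc2] at htr
  rw [Sm_det hσ a hea hc1 hc2 hc'a (pJ_ne c) x (x*t),
    Xm_det hσ a hea hc'a hc'a' hc1 hcc' x (x*t)] at htr
  rcases mul_eq_zero.mp htr with h0 | h0
  · exact absurd h0 (epsv_ne_zero c)
  · linear_combination -h0

/-- relation for cross-block families -/
lemma Dm_cross {u v : Fin (2*ν)} (hu1 : u ≠ a) (hu2 : u ≠ pJ ν a) (hv1 : v ≠ a)
    (hv2 : v ≠ pJ ν a) (huv : u ≠ v) (hpuv : pJ ν u ≠ v) (t : F) (ht : t ≠ 0) :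
    epsv F u * Dm σ a (pJ ν u) (-(epsv F u * epsv F v) * t)
      + epsv F v * Dm σ u v t * Dm σ a (pJ ν v) 1 = 0 := by
  have hau' : a ≠ pJ ν u := fun h => hu2 (by rw [← pJ_pJ u, ← h])
  have hav' : a ≠ pJ ν v := fun h => hv2 (by rw [← pJ_pJ v, ← h])
  have hu'v' : pJ ν u ≠ pJ ν v := fun h => huv (pJ_inj h)
  have hx : -(epsv F u * epsv F v) * t ≠ 0 :=
    mul_ne_zero (neg_ne_zero.mpr (mul_ne_zero (epsv_ne_zero u) (epsv_ne_zero v))) ht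
  have hsrc : Bf F (v2 F u v t) (v3 F a (pJ ν u) (pJ ν v) (-(epsv F u * epsv F v) * t) 1)
      = 0 := by
    rw [L5 a u v hu1 hu2 hv1 hv2 huv]
    have h1 := epsv_sq (F := F) u
    linear_combination (- epsv F v * t) * h1
  have htr := perp_transfer hσ _ _ _ _ (sigma_v2 hσ huv t)
    (sigma_v3 hσ hau' hav' hu'v' (-(epsv F u * epsv F v) * t) 1) hsrc
  rw [L5 a u v hu1 hu2 hv1 hv2 huv] at htr
  rw [Sm_det hσ a hea (fun h => hau' h.symm) (fun h => hu1 (pJ_inj h))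
      (fun h => hav' h.symm) hu'v'.symm,
    Xm_det hσ a hea (fun h => hav' h.symm) (fun h => hv1 (pJ_inj h))
      (fun h => hau' h.symm) hu'v'] at htr
  linear_combination htr

omit hσ hea in
lemma mk_v2_swap {u w : Fin (2*ν)} (huw : u ≠ w) {t : F} (ht : t ≠ 0) :
    Projectivization.mk F (v2 F u w t) (v2_ne_zero huw t)
      = Projectivization.mk F (v2 F w u t⁻¹) (v2_ne_zero huw.symm t⁻¹) := by
  rw [Projectivization.mk_eq_mk_iff']
  refine ⟨t, funext fun j => ?_⟩
  rw [Pi.smul_apply, smul_eq_mul]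
  by_cases hj : j = u
  · subst hj
    rw [v2_apply_b huw.symm, v2_apply_a huw, mul_inv_cancel₀ ht]
  · by_cases hj2 : j = w
    · subst hj2
      rw [v2_apply_a huw.symm, v2_apply_b huw, mul_one]
    · rw [v2_apply_other hj2 hj, v2_apply_other hj hj2, mul_zero]

omit hea in
lemma Dm_rev {u w : Fin (2*ν)} (huw : u ≠ w) {t : F} (ht : t ≠ 0) :
    Dm σ w u t⁻¹ = (Dm σ u w t)⁻¹ := by
  have h1 := sigma_v2 hσ huw t
  have h2 := sigma_v2 hσ huw.symm t⁻¹
  rw [mk_v2_swap huw ht] at h1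
  rw [h1] at h2
  have h3 := (mk_v2_swap huw (Dm_ne_zero hσ huw ht)).symm.trans h2
  exact (mk_v2_inj huw.symm h3).symm

/-- the multiplicative pairing relation between the `(a,d)` and `(a',d')` families -/
lemma Dm_M4 {d : Fin (2*ν)} (hd1 : d ≠ a) (hd2 : d ≠ pJ ν a) {s : F} (hs : s ≠ 0) :
    1 + epsv F d * Dm σ a d s * Dm σ (pJ ν a) (pJ ν d) (-(epsv F d)/s) = 0 := by
  have had : a ≠ d := hd1.symm
  have he1 : pJ ν d ≠ a := fun h => hd2 (by rw [← pJ_pJ d, h])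
  have hde : pJ ν d ≠ d := pJ_ne d
  have hae : a ≠ pJ ν d := he1.symm
  have hsq := epsv_sq (F := F) d
  have hd0 := epsv_ne_zero (F := F) d
  have ht₀ne : -(epsv F d)/s ≠ 0 := by
    rw [div_ne_zero_iff]
    exact ⟨neg_ne_zero.mpr hd0, hs⟩
  have ha'd' : pJ ν a ≠ pJ ν d := fun h => had (pJ_inj h)
  have hval : epsv F a + epsv F d * s * (-(epsv F d)/s) = 0 := by
    rw [hea]
    field_simp
    linear_combination (-1) * hsq
  have hv0 : v3 F a d (pJ ν d) s 0 = v2 F a d s := v3_zero a d (pJ ν d) s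
  have hsrc2 : Bf F (v3 F a d (pJ ν d) s 0) (v2 F (pJ ν a) (pJ ν d) (-(epsv F d)/s)) = 0 := by
    rw [L2 a d (pJ ν d) hd1 hd2 he1 hde s 0 (-(epsv F d)/s)]; exact hval
  have hmk2 : σ (Projectivization.mk F (v3 F a d (pJ ν d) s 0) (v3_ne_zero had hae s 0))
      = Projectivization.mk F (v2 F a d (Dm σ a d s)) (v2_ne_zero had _) := by
    rw [mk_eq_of_veq (v3_ne_zero had hae s 0) (v2_ne_zero had s) hv0]
    exact sigma_v2 hσ had s
  have htr2 := perp_transfer hσ _ _ _ _ hmk2 (sigma_v2 hσ ha'd' (-(epsv F d)/s)) hsrc2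
  rw [← v3_zero a d (pJ ν d) (Dm σ a d s),
    L2 a d (pJ ν d) hd1 hd2 he1 hde, hea] at htr2
  exact htr2
end Detect

section Assembly

variable (hν : 1 < ν)

def z0 : Fin (2*ν) := ⟨0, by omega⟩
def z1 : Fin (2*ν) := ⟨1, by omega⟩
def z2 : Fin (2*ν) := ⟨2, by omega⟩

lemma pJ_z0 : pJ ν (z0 hν) = z1 hν := by
  apply Fin.ext
  show (if 0 % 2 = 0 then 0 + 1 else 0 - 1) = 1
  norm_num

lemma pJ_z1 : pJ ν (z1 hν) = z0 hν := by
  apply Fin.ext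
  show (if 1 % 2 = 0 then 1 + 1 else 1 - 1) = 0
  norm_num

lemma eps_z0 : epsv F (z0 hν) = 1 := by
  show (if 0 % 2 = 0 then (1:F) else -1) = 1
  norm_num

lemma eps_z2 : epsv F (z2 hν) = 1 := by
  show (if 2 % 2 = 0 then (1:F) else -1) = 1
  norm_num

lemma z1_ne_z0 : z1 hν ≠ z0 hν := by
  intro h; exact absurd (congrArg Fin.val h) (by norm_num [z0, z1])

lemma z2_ne_z0 : z2 hν ≠ z0 hν := by
  intro h; exact absurd (congrArg Fin.val h) (by norm_num [z0, z2])

lemma z2_ne_z1 : z2 hν ≠ z1 hν := by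
  intro h; exact absurd (congrArg Fin.val h) (by norm_num [z1, z2])

variable (σ)

/-- the field permutation attached to `σ` -/
noncomputable def piF : F → F :=
  fun t => Dm σ (z0 hν) (z1 hν) t / Dm σ (z0 hν) (z1 hν) 1

/-- the coefficient data attached to `σ` -/
noncomputable def kap (j : Fin (2*ν)) : F :=
  if j = z0 hν then 1 else Dm σ (z0 hν) j 1

variable {σ}

section WithSigma

variable (hσ : σ ∈ Efix F ν)

include hσ

lemma A_one_ne : Dm σ (z0 hν) (z1 hν) 1 ≠ 0 :=
  Dm_ne_zero hσ (Ne.symm (z1_ne_z0 hν)) one_ne_zero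

lemma A_add (s z : F) : Dm σ (z0 hν) (z1 hν) (s + z)
    = Dm σ (z0 hν) (z1 hν) s + Dm σ (z0 hν) (z1 hν) z := by
  have h01 : z0 hν ≠ z1 hν := Ne.symm (z1_ne_z0 hν)
  rcases eq_or_ne z 0 with rfl | hz
  · rw [add_zero, Dm_zero hσ h01, add_zero]
  have key : ∀ s' : F, Dm σ (z0 hν) (z1 hν) (s' + z)
      = Dm σ (z0 hν) (z1 hν) s'
        - Dm σ (z0 hν) (z2 hν) (-z) * Dm σ (z0 hν) (pJ ν (z2 hν)) 1 := by
    intro s'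
    have h := funeq hσ (z0 hν) (eps_z0 hν) (z2_ne_z0 hν)
      (by rw [pJ_z0]; exact z2_ne_z1 hν) s' (-z) 1 (neg_ne_zero.mpr hz) one_ne_zero
    rw [pJ_z0] at h
    rw [show s' - epsv F (z2 hν) * (-z) * 1 = s' + z by rw [eps_z2]; ring, eps_z2] at h
    rw [h]; ring
  have h0 := key 0
  rw [zero_add, Dm_zero hσ h01, zero_sub] at h0
  rw [key s, h0]; ring

lemma A_neg (s : F) : Dm σ (z0 hν) (z1 hν) (-s) = - Dm σ (z0 hν) (z1 hν) s := by
  have h := A_add hν hσ s (-s)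
  rw [add_neg_cancel, Dm_zero hσ (Ne.symm (z1_ne_z0 hν))] at h
  linear_combination -h

lemma A_mul {x y : F} (hx : x ≠ 0) (hy : y ≠ 0) :
    Dm σ (z0 hν) (z1 hν) (x*y) * Dm σ (z0 hν) (z1 hν) 1
      = Dm σ (z0 hν) (z1 hν) x * Dm σ (z0 hν) (z1 hν) y := by
  have hE : ∀ u w : F, u ≠ 0 → w ≠ 0 → Dm σ (z0 hν) (z1 hν) (-(u*w))
      = - (Dm σ (z0 hν) (z2 hν) u * Dm σ (z0 hν) (pJ ν (z2 hν)) w) := by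
    intro u w hu hw
    have h := funeq hσ (z0 hν) (eps_z0 hν) (z2_ne_z0 hν)
      (by rw [pJ_z0]; exact z2_ne_z1 hν) 0 u w hu hw
    rw [pJ_z0] at h
    rw [show (0:F) - epsv F (z2 hν) * u * w = -(u*w) by rw [eps_z2]; ring, eps_z2,
      Dm_zero hσ (Ne.symm (z1_ne_z0 hν))] at h
    rw [h]; ring
  have h1 := hE (-x) y (neg_ne_zero.mpr hx) hy
  have h2 := hE (-x) 1 (neg_ne_zero.mpr hx) one_ne_zero
  have h3 := hE (-1) y (neg_ne_zero.mpr one_ne_zero) hy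
  have h4 := hE (-1) 1 (neg_ne_zero.mpr one_ne_zero) one_ne_zero
  rw [show -(-x*y) = x*y by ring] at h1
  rw [show -(-x*1) = x by ring] at h2
  rw [show -(-1*y) = y by ring] at h3
  rw [show -(-1*1) = (1:F) by ring] at h4
  rw [h1, h2, h3, h4]; ring

lemma piF_zero : piF σ hν 0 = 0 := by
  unfold piF
  rw [Dm_zero hσ (Ne.symm (z1_ne_z0 hν)), zero_div]

lemma piF_one : piF σ hν 1 = 1 := div_self (A_one_ne hν hσ)

lemma piF_add (s z : F) : piF σ hν (s + z) = piF σ hν s + piF σ hν z := by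
  unfold piF
  rw [A_add hν hσ, add_div]

lemma piF_mul (x y : F) : piF σ hν (x * y) = piF σ hν x * piF σ hν y := by
  rcases eq_or_ne x 0 with rfl | hx
  · rw [zero_mul, piF_zero hν hσ, zero_mul]
  rcases eq_or_ne y 0 with rfl | hy
  · rw [mul_zero, piF_zero hν hσ, mul_zero]
  unfold piF
  have h := A_mul hν hσ hx hy
  have hA := A_one_ne hν hσ
  rw [div_mul_div_comm, div_eq_div_iff hA (mul_ne_zero hA hA)]
  linear_combination Dm σ (z0 hν) (z1 hν) 1 * h

lemma piF_ne_zero {t : F} (ht : t ≠ 0) : piF σ hν t ≠ 0 :=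
  div_ne_zero (Dm_ne_zero hσ (Ne.symm (z1_ne_z0 hν)) ht) (A_one_ne hν hσ)

lemma piF_neg (s : F) : piF σ hν (-s) = - piF σ hν s := by
  unfold piF
  rw [A_neg hν hσ, neg_div]

lemma piF_inv (t : F) : piF σ hν t⁻¹ = (piF σ hν t)⁻¹ := by
  rcases eq_or_ne t 0 with rfl | ht
  · rw [_root_.inv_zero, piF_zero hν hσ, _root_.inv_zero]
  have h := piF_mul hν hσ t t⁻¹
  rw [mul_inv_cancel₀ ht, piF_one hν hσ] at h
  exact (inv_eq_of_mul_eq_one_right h.symm).symm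

lemma piF_eps (j : Fin (2*ν)) (t : F) :
    piF σ hν (epsv F j * t) = epsv F j * piF σ hν t := by
  unfold epsv
  split_ifs
  · rw [one_mul, one_mul]
  · rw [neg_one_mul, neg_one_mul, piF_neg hν hσ]

lemma piF_inj : Function.Injective (piF σ hν) := by
  intro x y h
  unfold piF at h
  have hA := A_one_ne hν hσ
  apply Dm_inj hσ (Ne.symm (z1_ne_z0 hν))
  field_simp at h
  exact h

lemma kap_ne_zero (j : Fin (2*ν)) : kap σ hν j ≠ 0 := by
  unfold kap
  split_ifs with h
  · exact one_ne_zero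
  · exact Dm_ne_zero hσ (fun hc => h hc.symm) one_ne_zero

omit hσ in
lemma kap_z0 : kap σ hν (z0 hν) = 1 := by
  unfold kap; rw [if_pos rfl]

omit hσ in
lemma kap_z1 : kap σ hν (z1 hν) = Dm σ (z0 hν) (z1 hν) 1 := by
  unfold kap; rw [if_neg (z1_ne_z0 hν)]

omit hσ in
lemma kap_other {b : Fin (2*ν)} (hb : b ≠ z0 hν) : kap σ hν b = Dm σ (z0 hν) b 1 := by
  unfold kap; rw [if_neg hb]

/-- `Dm` from the base point `z0` -/
lemma Dm_z0_formula {b : Fin (2*ν)} (hb : b ≠ z0 hν) {t : F} (ht : t ≠ 0) :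
    Dm σ (z0 hν) b t = kap σ hν b * piF σ hν t := by
  rcases eq_or_ne b (z1 hν) with rfl | hb1
  · rw [kap_z1 hν]
    unfold piF
    field_simp [A_one_ne hν hσ]
  -- general case
  have hb2 : b ≠ pJ ν (z0 hν) := by rw [pJ_z0]; exact hb1
  have hb'0 : pJ ν b ≠ z0 hν := fun h => hb1 (by rw [← pJ_pJ b, h, pJ_z0])
  have hE : ∀ u : F, u ≠ 0 → Dm σ (z0 hν) (z1 hν) (-(epsv F b * u))
      = - (epsv F b * Dm σ (z0 hν) b u * Dm σ (z0 hν) (pJ ν b) 1) := by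
    intro u hu
    have h := funeq hσ (z0 hν) (eps_z0 hν) hb hb2 0 u 1 hu one_ne_zero
    rw [pJ_z0, Dm_zero hσ (Ne.symm (z1_ne_z0 hν))] at h
    rw [show (0:F) - epsv F b * u * 1 = -(epsv F b * u) by ring] at h
    rw [h]; ring
  have hsq := epsv_sq (F := F) b
  have hb0 := epsv_ne_zero (F := F) b
  -- A (-(eps*u)) = -eps * A u
  have hAe : ∀ u : F, Dm σ (z0 hν) (z1 hν) (-(epsv F b * u))
      = - epsv F b * Dm σ (z0 hν) (z1 hν) u := by
    intro u
    rcases epsv_cases (F := F) b with h | h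
    · rw [h, one_mul, A_neg hν hσ]; ring
    · rw [h]
      rw [show -(-1 * u) = u by ring]; ring
  have h1 := hE t ht
  have h2 := hE 1 one_ne_zero
  rw [hAe] at h1 h2
  rw [kap_other hν hb]
  -- from h1 : -eps * A t = -(eps * Dm t * Dm' 1), h2 : -eps * A 1 = -(eps * Dm 1 * Dm' 1)
  have hD' : Dm σ (z0 hν) (pJ ν b) 1 ≠ 0 := Dm_ne_zero hσ (Ne.symm hb'0) one_ne_zero
  have hA := A_one_ne hν hσ
  unfold piF
  have e1 : Dm σ (z0 hν) (z1 hν) t = Dm σ (z0 hν) b t * Dm σ (z0 hν) (pJ ν b) 1 := by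
    linear_combination (-epsv F b) * h1
      + (Dm σ (z0 hν) b t * Dm σ (z0 hν) (pJ ν b) 1 - Dm σ (z0 hν) (z1 hν) t) * hsq
  have e2 : Dm σ (z0 hν) (z1 hν) 1 = Dm σ (z0 hν) b 1 * Dm σ (z0 hν) (pJ ν b) 1 := by
    linear_combination (-epsv F b) * h2
      + (Dm σ (z0 hν) b 1 * Dm σ (z0 hν) (pJ ν b) 1 - Dm σ (z0 hν) (z1 hν) 1) * hsq
  field_simp
  linear_combination Dm σ (z0 hν) b t * e2 - Dm σ (z0 hν) b 1 * e1

lemma kap_pair (j : Fin (2*ν)) :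
    kap σ hν j * kap σ hν (pJ ν j) = kap σ hν (z1 hν) := by
  rcases eq_or_ne j (z0 hν) with rfl | h0
  · rw [kap_z0 hν, pJ_z0, one_mul]
  rcases eq_or_ne j (z1 hν) with rfl | h1
  · rw [pJ_z1, kap_z0 hν, mul_one]
  have hb2 : j ≠ pJ ν (z0 hν) := by rw [pJ_z0]; exact h1
  have hb'0 : pJ ν j ≠ z0 hν := fun h => h1 (by rw [← pJ_pJ j, h, pJ_z0])
  have h := funeq hσ (z0 hν) (eps_z0 hν) h0 hb2 0 1 1 one_ne_zero one_ne_zero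
  rw [pJ_z0, Dm_zero hσ (Ne.symm (z1_ne_z0 hν))] at h
  rw [show (0:F) - epsv F j * 1 * 1 = -(epsv F j * 1) by ring] at h
  have hAe : Dm σ (z0 hν) (z1 hν) (-(epsv F j * 1))
      = - epsv F j * Dm σ (z0 hν) (z1 hν) 1 := by
    rcases epsv_cases (F := F) j with he | he
    · rw [he, show -((1:F)*1) = -1 by ring, A_neg hν hσ]; ring
    · rw [he, show -(-1 * (1:F)) = 1 by ring]; ring
  rw [hAe] at h
  rw [kap_z1 hν, kap_other hν h0, kap_other hν hb'0]
  have hsq := epsv_sq (F := F) j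
  linear_combination epsv F j * h
    + (Dm σ (z0 hν) (z1 hν) 1 - Dm σ (z0 hν) j 1 * Dm σ (z0 hν) (pJ ν j) 1) * hsq


lemma Dm_z1_formula {b : Fin (2*ν)} (hb0 : b ≠ z0 hν) (hb1 : b ≠ z1 hν) {t : F} (ht : t ≠ 0) :
    Dm σ (z1 hν) b t = kap σ hν b / kap σ hν (z1 hν) * piF σ hν t := by
  have hd1 : pJ ν b ≠ z0 hν := fun h => hb1 (by rw [← pJ_pJ b, h, pJ_z0])
  have hd2 : pJ ν b ≠ pJ ν (z0 hν) := by
    rw [pJ_z0]; exact fun h => hb0 (by rw [← pJ_pJ b, h, pJ_z1])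
  have he' := epsv_ne_zero (F := F) (pJ ν b)
  have hs₀ : -(epsv F (pJ ν b))/t ≠ 0 := div_ne_zero (neg_ne_zero.mpr he') ht
  have h := Dm_M4 hσ (z0 hν) (eps_z0 hν) hd1 hd2 hs₀
  rw [pJ_z0, pJ_pJ] at h
  have harg : -(epsv F (pJ ν b)) / (-(epsv F (pJ ν b))/t) = t := by
    field_simp
  rw [harg] at h
  rw [Dm_z0_formula hν hσ hd1 hs₀] at h
  have hps : piF σ hν (-(epsv F (pJ ν b))/t) = -(epsv F (pJ ν b)) * (piF σ hν t)⁻¹ := by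
    rw [show -(epsv F (pJ ν b))/t = epsv F (pJ ν b) * (-t⁻¹) by field_simp,
      piF_eps hν hσ, show (-t⁻¹ : F) = -(t⁻¹) by ring, piF_neg hν hσ, piF_inv hν hσ]
    ring
  rw [hps] at h
  have hsq' := epsv_sq (F := F) (pJ ν b)
  have hP := mul_inv_cancel₀ (piF_ne_zero hν hσ ht)
  have h2 : kap σ hν (pJ ν b) * Dm σ (z1 hν) b t = piF σ hν t := by
    linear_combination (-(piF σ hν t)) * h
      + (-(kap σ hν (pJ ν b) * Dm σ (z1 hν) b t)) * hsq'
      + (-(kap σ hν (pJ ν b) * Dm σ (z1 hν) b t * epsv F (pJ ν b)^2)) * hP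
  have hKp := kap_pair hν hσ b
  have hk1 := kap_ne_zero hν hσ (z1 hν)
  rw [div_mul_eq_mul_div, eq_div_iff hk1]
  linear_combination kap σ hν b * h2 - Dm σ (z1 hν) b t * hKp

lemma Dm_samepair {c : Fin (2*ν)} (hc0 : c ≠ z0 hν) (hc1 : c ≠ z1 hν) {t : F} (ht : t ≠ 0) :
    Dm σ c (pJ ν c) t = kap σ hν (pJ ν c) / kap σ hν c * piF σ hν t := by
  have hc2 : c ≠ pJ ν (z0 hν) := by rw [pJ_z0]; exact hc1
  have hc'0 : pJ ν c ≠ z0 hν := fun h => hc1 (by rw [← pJ_pJ c, h, pJ_z0])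
  have h := Dm_block hσ (z0 hν) (eps_z0 hν) hc0 hc2 1 t one_ne_zero ht
  rw [one_mul, Dm_z0_formula hν hσ hc'0 ht, ← kap_other hν hc0] at h
  have hkc := kap_ne_zero hν hσ c
  rw [div_mul_eq_mul_div, eq_div_iff hkc]
  linear_combination -h

lemma Dm_crossf {u v : Fin (2*ν)} (hu0 : u ≠ z0 hν) (hu1 : u ≠ z1 hν) (hv0 : v ≠ z0 hν)
    (hv1 : v ≠ z1 hν) (huv : u ≠ v) (hpuv : pJ ν u ≠ v) {t : F} (ht : t ≠ 0) :
    Dm σ u v t = kap σ hν v / kap σ hν u * piF σ hν t := by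
  have hu2 : u ≠ pJ ν (z0 hν) := by rw [pJ_z0]; exact hu1
  have hv2 : v ≠ pJ ν (z0 hν) := by rw [pJ_z0]; exact hv1
  have hu'0 : pJ ν u ≠ z0 hν := fun h => hu1 (by rw [← pJ_pJ u, h, pJ_z0])
  have hv'0 : pJ ν v ≠ z0 hν := fun h => hv1 (by rw [← pJ_pJ v, h, pJ_z0])
  have h := Dm_cross hσ (z0 hν) (eps_z0 hν) hu0 hu2 hv0 hv2 huv hpuv t ht
  have hargne : -(epsv F u * epsv F v) * t ≠ 0 :=
    mul_ne_zero (neg_ne_zero.mpr (mul_ne_zero (epsv_ne_zero u) (epsv_ne_zero v))) ht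
  rw [Dm_z0_formula hν hσ hu'0 hargne,
    show -(epsv F u * epsv F v) * t = epsv F u * (epsv F v * (-t)) by ring,
    piF_eps hν hσ, piF_eps hν hσ, show (-t : F) = -t from rfl, piF_neg hν hσ,
    ← kap_other hν hv'0] at h
  have hsqu := epsv_sq (F := F) u
  have hKpu := kap_pair hν hσ u
  have hKpv := kap_pair hν hσ v
  have hku := kap_ne_zero hν hσ u
  have hk1 := kap_ne_zero hν hσ (z1 hν)
  have hevne := epsv_ne_zero (F := F) v
  have h3 : Dm σ u v t * kap σ hν (pJ ν v) = kap σ hν (pJ ν u) * piF σ hν t := by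
    have h2 : epsv F v * (Dm σ u v t * kap σ hν (pJ ν v)
        - kap σ hν (pJ ν u) * piF σ hν t) = 0 := by
      linear_combination h + (epsv F v * kap σ hν (pJ ν u) * piF σ hν t) * hsqu
    rcases mul_eq_zero.mp h2 with h4 | h4
    · exact absurd h4 hevne
    · linear_combination h4
  have h5 : kap σ hν (z1 hν) * (Dm σ u v t * kap σ hν u)
      = kap σ hν (z1 hν) * (kap σ hν v * piF σ hν t) := by
    linear_combination (kap σ hν u * kap σ hν v) * h3
      + (- (Dm σ u v t * kap σ hν u)) * hKpv
      + (kap σ hν v * piF σ hν t) * hKpu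
  rw [div_mul_eq_mul_div, eq_div_iff hku]
  exact mul_left_cancel₀ hk1 h5


/-- the master formula: every family's parameter map -/
lemma Dm_master (a b : Fin (2*ν)) (hab : a ≠ b) (t : F) :
    Dm σ a b t = kap σ hν b / kap σ hν a * piF σ hν t := by
  rcases eq_or_ne t 0 with rfl | ht
  · rw [Dm_zero hσ hab, piF_zero hν hσ, mul_zero]
  have hrev : ∀ (u w : Fin (2*ν)), u ≠ w →
      Dm σ w u t = (Dm σ u w t⁻¹)⁻¹ := by
    intro u w huw
    have h := Dm_rev hσ huw (inv_ne_zero ht)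
    rw [inv_inv] at h
    rw [h]
  have hpi : piF σ hν t⁻¹ = (piF σ hν t)⁻¹ := piF_inv hν hσ t
  have hpine := piF_ne_zero hν hσ ht
  have hpine' := piF_ne_zero hν hσ (inv_ne_zero ht)
  rcases eq_or_ne a (z0 hν) with rfl | ha0
  · rw [Dm_z0_formula hν hσ hab.symm ht, kap_z0 hν, div_one]
  rcases eq_or_ne b (z0 hν) with rfl | hb0
  · rw [hrev (z0 hν) a ha0.symm, Dm_z0_formula hν hσ ha0 (inv_ne_zero ht), kap_z0 hν, hpi]
    have hka := kap_ne_zero hν hσ a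
    field_simp
  rcases eq_or_ne a (z1 hν) with rfl | ha1
  · rw [Dm_z1_formula hν hσ hb0 hab.symm ht]
  rcases eq_or_ne b (z1 hν) with rfl | hb1
  · rw [hrev (z1 hν) a ha1.symm, Dm_z1_formula hν hσ ha0 ha1 (inv_ne_zero ht), hpi]
    have hka := kap_ne_zero hν hσ a
    have hk1 := kap_ne_zero hν hσ (z1 hν)
    field_simp
  rcases eq_or_ne b (pJ ν a) with rfl | hbpa
  · exact Dm_samepair hν hσ ha0 ha1 ht
  · exact Dm_crossf hν hσ ha0 ha1 hb0 hb1 hab (fun h => hbpa h.symm) ht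

end WithSigma

end Assembly

section Phi

/-- the `a`-part of the weight -/
noncomputable def aW (k : Fin ν → Fˣ) (j : Fin (2*ν)) : Fˣ :=
  if h : j.1/2 = 0 then 1 else k ⟨j.1/2, by have := j.2; omega⟩

/-- the weight function attached to `(k, π)` -/
noncomputable def Wt (k : Fin ν → Fˣ) (j : Fin (2*ν)) : Fˣ :=
  if j.1 % 2 = 0 then aW k j else (k ⟨0, by have := j.2; omega⟩) * (aW k j)⁻¹

lemma aW_pJ (k : Fin ν → Fˣ) (j : Fin (2*ν)) : aW k (pJ ν j) = aW k j := by
  rcases j with ⟨v, hv⟩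
  have hval : (pJ ν ⟨v, hv⟩).1 = if v % 2 = 0 then v + 1 else v - 1 := rfl
  unfold aW
  by_cases h : v % 2 = 0
  · have h2 : (pJ ν ⟨v, hv⟩).1 / 2 = v / 2 := by rw [hval, if_pos h]; omega
    simp only [h2]
  · have h2 : (pJ ν ⟨v, hv⟩).1 / 2 = v / 2 := by rw [hval, if_neg h]; omega
    simp only [h2]

lemma Wt_mul_pJ (k : Fin ν → Fˣ) (j : Fin (2*ν)) :
    Wt k j * Wt k (pJ ν j) = k ⟨0, by have := j.2; omega⟩ := by
  rcases j with ⟨v, hv⟩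
  have hval : (pJ ν ⟨v, hv⟩).1 = if v % 2 = 0 then v + 1 else v - 1 := rfl
  have haw := aW_pJ k ⟨v, hv⟩
  unfold Wt
  by_cases h : v % 2 = 0
  · have h2 : ¬ ((pJ ν ⟨v, hv⟩).1 % 2 = 0) := by rw [hval, if_pos h]; omega
    rw [if_pos h, if_neg h2, haw, mul_comm, mul_assoc, inv_mul_cancel, mul_one]
  · have h2 : (pJ ν ⟨v, hv⟩).1 % 2 = 0 := by rw [hval, if_neg h]; omega
    rw [if_neg h, if_pos h2, haw, mul_assoc, inv_mul_cancel, mul_one]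

lemma aW_one (j : Fin (2*ν)) : aW (1 : Fin ν → Fˣ) j = 1 := by
  unfold aW; split <;> rfl

lemma Wt_one (j : Fin (2*ν)) : Wt (1 : Fin ν → Fˣ) j = 1 := by
  unfold Wt
  rw [aW_one]
  split <;> simp

lemma aW_mul (k k' : Fin ν → Fˣ) (π : RingAut F) (j : Fin (2*ν)) :
    (aW (k * (phiAct F ν) π k') j : F) = (aW k j : F) * π (aW k' j : F) := by
  unfold aW
  split
  · simp
  · simp [phiAct, Units.val_mul]

lemma Wt_mul (k k' : Fin ν → Fˣ) (π : RingAut F) (j : Fin (2*ν)) :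
    (Wt (k * (phiAct F ν) π k') j : F) = (Wt k j : F) * π (Wt k' j : F) := by
  unfold Wt
  split
  · exact aW_mul k k' π j
  · rw [Units.val_mul, Units.val_mul, Units.val_mul]
    rw [Units.val_inv_eq_inv_val, Units.val_inv_eq_inv_val, Units.val_inv_eq_inv_val]
    rw [_root_.map_mul, map_inv₀, aW_mul]
    have : ((((phiAct F ν) π k') ⟨0, by have := j.2; omega⟩ : Fˣ) : F)
        = π ((k' ⟨0, by have := j.2; omega⟩ : Fˣ) : F) := by
      simp [phiAct]
    rw [Pi.mul_apply, Units.val_mul, this]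
    have hne : ((aW k j : Fˣ) : F) ≠ 0 := Units.ne_zero _
    have hne2 : π ((aW k' j : Fˣ) : F) ≠ 0 := by
      intro hc
      have := π.injective (hc.trans (map_zero π).symm)
      exact Units.ne_zero _ this
    field_simp

/-- the semilinear map on coordinates -/
noncomputable def fL (k : Fin ν → Fˣ) (π : RingAut F) (x : Fin (2*ν) → F) :
    Fin (2*ν) → F :=
  fun j => (Wt k j : F) * π (x j)

lemma fL_ne_zero (k : Fin ν → Fˣ) (π : RingAut F) {x : Fin (2*ν) → F} (hx : x ≠ 0) :
    fL k π x ≠ 0 := by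
  intro h
  apply hx
  funext j
  have := congrFun h j
  unfold fL at this
  rcases mul_eq_zero.mp this with h1 | h1
  · exact absurd h1 (Units.ne_zero _)
  · have := π.injective (h1.trans (map_zero π).symm)
    rw [this]; rfl

/-- the induced map on the projective space -/
noncomputable def phiP (k : Fin ν → Fˣ) (π : RingAut F)
    (p : Projectivization F (Fin (2*ν) → F)) : Projectivization F (Fin (2*ν) → F) :=
  Projectivization.mk F (fL k π p.rep) (fL_ne_zero k π p.rep_nonzero)

lemma phiP_mk (k : Fin ν → Fˣ) (π : RingAut F) (x : Fin (2*ν) → F) (hx : x ≠ 0) :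
    phiP k π (Projectivization.mk F x hx)
      = Projectivization.mk F (fL k π x) (fL_ne_zero k π hx) := by
  obtain ⟨u, hu⟩ := rep_mk_smul x hx
  unfold phiP
  rw [Projectivization.mk_eq_mk_iff']
  refine ⟨π (u : F), funext fun j => ?_⟩
  rw [Pi.smul_apply, smul_eq_mul]
  show π (u:F) * ((Wt k j : F) * π (x j)) = (Wt k j : F) * π ((Projectivization.mk F x hx).rep j)
  rw [hu, Pi.smul_apply, smul_eq_mul, _root_.map_mul]
  ring

lemma phiP_one (p : Projectivization F (Fin (2*ν) → F)) : phiP 1 (1 : RingAut F) p = p := by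
  unfold phiP
  have : fL (1 : Fin ν → Fˣ) (1 : RingAut F) p.rep = p.rep := by
    funext j
    unfold fL
    rw [Wt_one]
    show (1:F) * p.rep j = p.rep j
    rw [one_mul]
  conv_rhs => rw [← Projectivization.mk_rep p]
  exact mk_eq_of_veq _ _ this

lemma phiP_comp (k k' : Fin ν → Fˣ) (π π' : RingAut F)
    (p : Projectivization F (Fin (2*ν) → F)) :
    phiP k π (phiP k' π' p) = phiP (k * (phiAct F ν) π k') (π * π') p := by
  conv_lhs => rw [← Projectivization.mk_rep p]
  conv_rhs => rw [← Projectivization.mk_rep p]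
  rw [phiP_mk, phiP_mk, phiP_mk]
  apply mk_eq_of_veq
  funext j
  unfold fL
  rw [Wt_mul]
  have hcomp : (π * π') (p.rep j) = π (π' (p.rep j)) := rfl
  rw [hcomp, _root_.map_mul]
  ring

end Phi

section PhiHom

lemma map_epsv (π : RingAut F) (j : Fin (2*ν)) : π (epsv F j) = epsv F j := by
  unfold epsv
  split
  · exact _root_.map_one π
  · rw [map_neg, _root_.map_one]

lemma Bf_fL (hp : 0 < ν) (k : Fin ν → Fˣ) (π : RingAut F) (x y : Fin (2*ν) → F) :
    Bf F (fL k π x) (fL k π y) = (k ⟨0, hp⟩ : F) * π (Bf F x y) := by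
  unfold Bf fL
  rw [map_sum, Finset.mul_sum]
  refine Finset.sum_congr rfl fun j _ => ?_
  have hW := congrArg (Units.val) (Wt_mul_pJ k j)
  rw [Units.val_mul] at hW
  have hk : ((k ⟨0, by have := j.2; omega⟩ : Fˣ) : F) = ((k ⟨0, hp⟩ : Fˣ) : F) := rfl
  rw [hk] at hW
  rw [_root_.map_mul, _root_.map_mul, map_epsv]
  linear_combination (epsv F j * π (x j) * π (y (pJ ν j))) * hW

lemma phiP_adj (hp : 0 < ν) (k : Fin ν → Fˣ) (π : RingAut F)
    (p q : Projectivization F (Fin (2*ν) → F)) :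
    (SpG F ν).Adj (phiP k π p) (phiP k π q) ↔ (SpG F ν).Adj p q := by
  conv_lhs => rw [← Projectivization.mk_rep p, ← Projectivization.mk_rep q]
  conv_rhs => rw [← Projectivization.mk_rep p, ← Projectivization.mk_rep q]
  rw [phiP_mk, phiP_mk, adj_mk_iff, adj_mk_iff, Bf_fL hp]
  constructor
  · intro h hc
    exact h (by rw [hc, map_zero, mul_zero])
  · intro h hc
    rcases mul_eq_zero.mp hc with h1 | h1
    · exact Units.ne_zero _ h1
    · exact h (π.injective (h1.trans (map_zero π).symm))

lemma phiP_bP (k : Fin ν → Fˣ) (π : RingAut F) (j : Fin (2*ν)) :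
    phiP k π (bP F ν j) = bP F ν j := by
  unfold bP
  rw [phiP_mk, Projectivization.mk_eq_mk_iff']
  refine ⟨(Wt k j : F), funext fun i => ?_⟩
  rw [Pi.smul_apply, smul_eq_mul]
  unfold fL
  by_cases hi : i = j
  · subst hi
    rw [Pi.single_eq_same, _root_.map_one, mul_one]
  · rw [Pi.single_eq_of_ne hi, _root_.map_zero, mul_zero, mul_zero]

lemma phiP_v2 (k : Fin ν → Fˣ) (π : RingAut F) {a b : Fin (2*ν)} (hab : a ≠ b) (t : F) :
    phiP k π (Projectivization.mk F (v2 F a b t) (v2_ne_zero hab t))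
      = Projectivization.mk F (v2 F a b ((Wt k b : F) / (Wt k a : F) * π t))
          (v2_ne_zero hab _) := by
  rw [phiP_mk, Projectivization.mk_eq_mk_iff']
  refine ⟨((Wt k a : Fˣ) : F), funext fun i => ?_⟩
  rw [Pi.smul_apply, smul_eq_mul]
  unfold fL
  by_cases hi : i = a
  · subst hi
    rw [v2_apply_a hab, v2_apply_a hab, _root_.map_one, mul_one]
  · by_cases hi2 : i = b
    · subst hi2
      rw [v2_apply_b hab, v2_apply_b hab]
      have hWa := Units.ne_zero (Wt k a)
      field_simp
    · rw [v2_apply_other hi hi2, v2_apply_other hi hi2, _root_.map_zero, mul_zero, mul_zero]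

/-- the homomorphism from the semidirect product to permutations -/
noncomputable def phiHom (F : Type) [Field F] (ν : ℕ) :
    ((Fin ν → Fˣ) ⋊[phiAct F ν] (RingAut F)) →*
      Equiv.Perm (Projectivization F (Fin (2*ν) → F)) where
  toFun g :=
    { toFun := phiP g.left g.right
      invFun := phiP (g⁻¹).left (g⁻¹).right
      left_inv := fun p => by
        rw [phiP_comp, ← SemidirectProduct.mul_left, ← SemidirectProduct.mul_right,
          inv_mul_cancel, SemidirectProduct.one_left, SemidirectProduct.one_right]
        exact phiP_one p
      right_inv := fun p => by
        rw [phiP_comp, ← SemidirectProduct.mul_left, ← SemidirectProduct.mul_right,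
          mul_inv_cancel, SemidirectProduct.one_left, SemidirectProduct.one_right]
        exact phiP_one p }
  map_one' := by
    apply Equiv.ext
    intro p
    show phiP (1 : (Fin ν → Fˣ) ⋊[phiAct F ν] (RingAut F)).left
      (1 : (Fin ν → Fˣ) ⋊[phiAct F ν] (RingAut F)).right p = p
    rw [SemidirectProduct.one_left, SemidirectProduct.one_right]
    exact phiP_one p
  map_mul' := fun g h => by
    apply Equiv.ext
    intro p
    show phiP (g*h).left (g*h).right p = phiP g.left g.right (phiP h.left h.right p)
    rw [phiP_comp, SemidirectProduct.mul_left, SemidirectProduct.mul_right]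

lemma phiHom_apply (g : (Fin ν → Fˣ) ⋊[phiAct F ν] (RingAut F))
    (p : Projectivization F (Fin (2*ν) → F)) :
    phiHom F ν g p = phiP g.left g.right p := rfl

lemma eP_eq_bP (i : Fin ν) : eP F ν i = bP F ν ⟨2*i.1, by have := i.2; omega⟩ := rfl

lemma fP_eq_bP (i : Fin ν) : fP F ν i = bP F ν ⟨2*i.1+1, by have := i.2; omega⟩ := rfl

lemma phiHom_mem (hp : 0 < ν) (g : (Fin ν → Fˣ) ⋊[phiAct F ν] (RingAut F)) :
    phiHom F ν g ∈ Efix F ν := by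
  constructor
  · intro p q
    rw [phiHom_apply, phiHom_apply]
    exact phiP_adj hp g.left g.right p q
  · intro i
    constructor
    · rw [phiHom_apply, eP_eq_bP]
      exact phiP_bP g.left g.right _
    · rw [phiHom_apply, fP_eq_bP]
      exact phiP_bP g.left g.right _

end PhiHom

section Final

/-- an automorphism fixing all 1- and 2-coordinate points is the identity -/
lemma efix_eq_one {ρ : Equiv.Perm (Projectivization F (Fin (2*ν) → F))}
    (hρ : ρ ∈ Efix F ν)
    (hfix : ∀ (a b : Fin (2*ν)) (hab : a ≠ b) (t : F),
      ρ (Projectivization.mk F (v2 F a b t) (v2_ne_zero hab t))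
        = Projectivization.mk F (v2 F a b t) (v2_ne_zero hab t)) :
    ρ = 1 := by
  apply Equiv.ext
  intro p
  show ρ p = p
  have hsupp : ∀ j, (ρ p).rep j = 0 ↔ p.rep j = 0 := efix_supp hρ p
  have hrel : ∀ (a b : Fin (2*ν)), a ≠ b → ∀ t : F,
      (Bf F (ρ p).rep (v2 F a b t) = 0 ↔ Bf F p.rep (v2 F a b t) = 0) := by
    intro a b hab t
    have h := hρ.1 p (Projectivization.mk F (v2 F a b t) (v2_ne_zero hab t))
    rw [hfix a b hab t] at h
    rw [adj_iff_rep, adj_iff_rep] at h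
    obtain ⟨u, hu⟩ := rep_mk_smul (v2 F a b t) (v2_ne_zero hab t)
    rw [hu, Bf_smul_right, Bf_smul_right] at h
    have h2 := not_iff_not.mpr h
    rw [not_not, not_not] at h2
    have hun : ((u : Fˣ) : F) ≠ 0 := Units.ne_zero u
    constructor
    · intro hz
      rcases mul_eq_zero.mp (h2.mp (by rw [hz, mul_zero])) with h3 | h3
      · exact absurd h3 hun
      · exact h3
    · intro hz
      rcases mul_eq_zero.mp (h2.mpr (by rw [hz, mul_zero])) with h3 | h3
      · exact absurd h3 hun
      · exact h3
  have hex : ∃ j, p.rep j ≠ 0 := by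
    by_contra hno
    push_neg at hno
    exact p.rep_nonzero (funext fun j => hno j)
  obtain ⟨a₀, ha₀⟩ := hex
  have hy0 : (ρ p).rep a₀ ≠ 0 := fun h => ha₀ ((hsupp a₀).mp h)
  have hclaim : (ρ p).rep = ((ρ p).rep a₀ / p.rep a₀) • p.rep := by
    funext j
    rw [Pi.smul_apply, smul_eq_mul]
    by_cases hj : j = a₀
    · subst hj
      rw [div_mul_cancel₀ _ ha₀]
    · by_cases hxj : p.rep j = 0
      · rw [hxj, mul_zero]
        exact (hsupp j).mpr hxj
      · have hyj : (ρ p).rep j ≠ 0 := fun h => hxj ((hsupp j).mp h)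
        have hab : pJ ν a₀ ≠ pJ ν j := fun h => hj (pJ_inj h).symm
        have he1 := epsv_ne_zero (F := F) (pJ ν a₀)
        have he2 := epsv_ne_zero (F := F) (pJ ν j)
        set t₀ : F := -(epsv F (pJ ν a₀)) * p.rep a₀ / (epsv F (pJ ν j) * p.rep j) with ht₀
        have hsrc : Bf F p.rep (v2 F (pJ ν a₀) (pJ ν j) t₀) = 0 := by
          rw [Bf_v2_right, pJ_pJ, pJ_pJ, ht₀]
          field_simp
          ring
        have htgt := (hrel (pJ ν a₀) (pJ ν j) hab t₀).mpr hsrc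
        rw [Bf_v2_right, pJ_pJ, pJ_pJ, ht₀] at htgt
        field_simp at htgt
        have h5 : epsv F (pJ ν a₀) * (epsv F (pJ ν j)
            * (p.rep a₀ * (ρ p).rep j - (ρ p).rep a₀ * p.rep j)) = 0 := by
          linear_combination (epsv F (pJ ν j)) * htgt
        rcases mul_eq_zero.mp h5 with h6 | h6
        · exact absurd h6 he1
        rcases mul_eq_zero.mp h6 with h7 | h7
        · exact absurd h7 he2
        field_simp
        linear_combination h7
  conv_lhs => rw [← Projectivization.mk_rep (ρ p)]
  conv_rhs => rw [← Projectivization.mk_rep p]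
  rw [Projectivization.mk_eq_mk_iff']
  exact ⟨(ρ p).rep a₀ / p.rep a₀, hclaim.symm⟩

lemma Wt_z0 (hν : 1 < ν) (k : Fin ν → Fˣ) : Wt k (z0 hν) = 1 := by
  unfold Wt
  rw [if_pos (show (z0 hν).1 % 2 = 0 by norm_num [z0])]
  unfold aW
  rw [dif_pos (show (z0 hν).1 / 2 = 0 by norm_num [z0])]

lemma Wt_z1 (hν : 1 < ν) (k : Fin ν → Fˣ) :
    Wt k (z1 hν) = k ⟨0, by omega⟩ := by
  unfold Wt
  rw [if_neg (show ¬ ((z1 hν).1 % 2 = 0) by norm_num [z1])]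
  unfold aW
  rw [dif_pos (show (z1 hν).1 / 2 = 0 by norm_num [z1]), inv_one, mul_one]

lemma Wt_even (hν : 1 < ν) (k : Fin ν → Fˣ) (i : Fin ν) (hi : i.1 ≠ 0) :
    Wt k ⟨2*i.1, by have := i.2; omega⟩ = k i := by
  unfold Wt
  rw [if_pos (show (2*i.1) % 2 = 0 by omega)]
  unfold aW
  rw [dif_neg (show ¬ ((2*i.1) / 2 = 0) by omega)]
  exact congrArg k (Fin.ext (by show 2*i.1/2 = i.1; omega))

lemma phiHom_inj (hν : 1 < ν) : Function.Injective (phiHom F ν) := by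
  rw [injective_iff_map_eq_one]
  rintro ⟨l, r⟩ hg
  have happ : ∀ p, phiP l r p = p := fun p => by
    have := congrArg (fun (e : Equiv.Perm (Projectivization F (Fin (2*ν) → F))) => e p) hg
    exact this
  have h01 : z0 hν ≠ z1 hν := Ne.symm (z1_ne_z0 hν)
  have hkey : ∀ t : F, ((Wt l (z1 hν) : Fˣ) : F) / ((Wt l (z0 hν) : Fˣ) : F) * r t = t := by
    intro t
    have := happ (Projectivization.mk F (v2 F (z0 hν) (z1 hν) t) (v2_ne_zero h01 t))
    rw [phiP_v2 l r h01 t] at this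
    exact mk_v2_inj h01 this
  have hr1 : ((l ⟨0, by omega⟩ : Fˣ) : F) * r 1 = 1 := by
    have := hkey 1
    rwa [Wt_z0, Wt_z1, Units.val_one, div_one] at this
  rw [_root_.map_one, mul_one] at hr1
  have hl0 : l ⟨0, by omega⟩ = 1 := Units.ext hr1
  have hrid : ∀ t : F, r t = t := by
    intro t
    have := hkey t
    rwa [Wt_z0, Wt_z1, Units.val_one, div_one, hl0, Units.val_one, one_mul] at this
  have hli : ∀ i : Fin ν, i.1 ≠ 0 → l i = 1 := by
    intro i hi
    have hne : (z0 hν) ≠ (⟨2*i.1, by have := i.2; omega⟩ : Fin (2*ν)) := by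
      intro h
      have := congrArg Fin.val h
      simp only [z0] at this
      omega
    have := happ (Projectivization.mk F (v2 F (z0 hν) ⟨2*i.1, by have := i.2; omega⟩ 1)
      (v2_ne_zero hne 1))
    rw [phiP_v2 l r hne 1] at this
    have h2 := mk_v2_inj hne this
    rw [Wt_z0, Wt_even hν l i hi, Units.val_one, div_one, _root_.map_one, mul_one] at h2
    exact Units.ext h2
  have hl : l = 1 := by
    funext i
    rcases eq_or_ne i.1 0 with h | h
    · have : i = ⟨0, by omega⟩ := Fin.ext h
      rw [this, hl0]; rfl
    · rw [hli i h]; rfl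
  have hr : r = 1 := by
    apply RingEquiv.ext
    intro t
    rw [hrid t]; rfl
  rw [hl, hr]
  rfl

end Final

section Surj

variable [Fintype F]

lemma phiHom_surj (hν : 1 < ν) (σ : Equiv.Perm (Projectivization F (Fin (2*ν) → F)))
    (hσ : σ ∈ Efix F ν) : ∃ g, phiHom F ν g = σ := by
  -- the ring automorphism
  let πh : F →+* F :=
    { toFun := piF σ hν
      map_one' := piF_one hν hσ
      map_mul' := piF_mul hν hσ
      map_zero' := piF_zero hν hσ
      map_add' := piF_add hν hσ }
  have hbij : Function.Bijective πh := Finite.injective_iff_bijective.mp (piF_inj hν hσ)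
  let π : RingAut F := RingEquiv.ofBijective πh hbij
  have hπ : ∀ t, π t = piF σ hν t := fun _ => rfl
  -- the units
  let k : Fin ν → Fˣ := fun i =>
    if i.1 = 0 then Units.mk0 (kap σ hν (z1 hν)) (kap_ne_zero hν hσ _)
    else Units.mk0 (kap σ hν ⟨2*i.1, by have := i.2; omega⟩) (kap_ne_zero hν hσ _)
  have hW : ∀ j : Fin (2*ν), ((Wt k j : Fˣ) : F) = kap σ hν j := by
    rintro ⟨v, hv⟩
    by_cases hpar : v % 2 = 0
    · rw [show Wt k ⟨v, hv⟩ = aW k ⟨v, hv⟩ from if_pos hpar]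
      by_cases hv2 : v / 2 = 0
      · have hv0 : v = 0 := by omega
        subst hv0
        rw [show aW k ⟨0, hv⟩ = 1 by unfold aW; exact dif_pos (by norm_num)]
        rw [show (⟨0, hv⟩ : Fin (2*ν)) = z0 hν from rfl, kap_z0 hν]
        rfl
      · rw [show aW k ⟨v, hv⟩ = k ⟨v/2, by omega⟩ from dif_neg hv2]
        rw [show k ⟨v/2, by omega⟩
            = Units.mk0 (kap σ hν ⟨2*(v/2), by omega⟩) (kap_ne_zero hν hσ _) from if_neg hv2]
        rw [Units.val_mk0]
        exact congrArg (kap σ hν) (Fin.ext (by show 2*(v/2) = v; omega))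
    · rw [show Wt k ⟨v, hv⟩ = k ⟨0, by omega⟩ * (aW k ⟨v, hv⟩)⁻¹ from if_neg hpar]
      rw [show k ⟨0, by omega⟩
          = Units.mk0 (kap σ hν (z1 hν)) (kap_ne_zero hν hσ _) from if_pos rfl]
      by_cases hv2 : v / 2 = 0
      · have hv1 : v = 1 := by omega
        subst hv1
        rw [show aW k ⟨1, hv⟩ = 1 by unfold aW; exact dif_pos (by norm_num), inv_one, mul_one, Units.val_mk0]
        rfl
      · rw [show aW k ⟨v, hv⟩ = k ⟨v/2, by omega⟩ from dif_neg hv2]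
        rw [show k ⟨v/2, by omega⟩
            = Units.mk0 (kap σ hν ⟨2*(v/2), by omega⟩) (kap_ne_zero hν hσ _) from if_neg hv2]
        have hpj : (⟨2*(v/2), by omega⟩ : Fin (2*ν)) = pJ ν ⟨v, hv⟩ := by
          apply Fin.ext
          show 2*(v/2) = if v % 2 = 0 then v + 1 else v - 1
          rw [if_neg hpar]
          omega
        rw [hpj, Units.val_mul, Units.val_inv_eq_inv_val, Units.val_mk0, Units.val_mk0]
        have hKp := kap_pair hν hσ ⟨v, hv⟩
        have hk' := kap_ne_zero hν hσ (pJ ν ⟨v, hv⟩)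
        field_simp
        linear_combination -hKp
  refine ⟨⟨k, π⟩, ?_⟩
  have hp : 0 < ν := by omega
  have hg : phiHom F ν ⟨k, π⟩ ∈ Efix F ν := phiHom_mem hp _
  have hρ : (phiHom F ν ⟨k, π⟩)⁻¹ * σ ∈ Efix F ν :=
    (Efix F ν).mul_mem ((Efix F ν).inv_mem hg) hσ
  have hfix : ∀ (a b : Fin (2*ν)) (hab : a ≠ b) (t : F),
      ((phiHom F ν ⟨k, π⟩)⁻¹ * σ) (Projectivization.mk F (v2 F a b t) (v2_ne_zero hab t))
        = Projectivization.mk F (v2 F a b t) (v2_ne_zero hab t) := by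
    intro a b hab t
    have hsame : phiHom F ν ⟨k, π⟩ (Projectivization.mk F (v2 F a b t) (v2_ne_zero hab t))
        = σ (Projectivization.mk F (v2 F a b t) (v2_ne_zero hab t)) := by
      rw [phiHom_apply]
      show phiP k π _ = _
      rw [phiP_v2 k π hab t, sigma_v2 hσ hab t, Dm_master hν hσ a b hab t]
      exact mk_eq_of_veq _ _ (by rw [hW a, hW b, hπ t])
    show (phiHom F ν ⟨k, π⟩)⁻¹ (σ _) = _
    rw [← hsame]
    exact Equiv.symm_apply_apply _ _
  have h1 := efix_eq_one hρ hfix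
  rw [inv_mul_eq_one] at h1
  exact h1

end Surj
end Development

/-- For `ν > 1` and `q > 2`, the subgroup `E` of `Aut(Sp(2ν,q))` fixing all the
vertices `[e_i]` and `[f_i]` is isomorphic to the semidirect product
`(F_q^* × ⋯ × F_q^*) ⋊_φ Aut(F_q)` (with `ν` factors `F_q^*`), where `φ` is the
coordinatewise action. -/
theorem E_iso_semidirectProduct (q ν : ℕ) (F : Type) [Field F] [Fintype F]
    (hF : Fintype.card F = q) (hq : 2 < q) (hν : 1 < ν) :
    Nonempty (Efix F ν ≃* (Fin ν → Fˣ) ⋊[phiAct F ν] (RingAut F)) := by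
  have hp : 0 < ν := by omega
  let Φ' : ((Fin ν → Fˣ) ⋊[phiAct F ν] (RingAut F)) →* (Efix F ν) :=
    (phiHom F ν).codRestrict (Efix F ν) (fun g => phiHom_mem hp g)
  have hinj : Function.Injective Φ' := fun g h hgh =>
    phiHom_inj hν (congrArg Subtype.val hgh)
  have hsurj : Function.Surjective Φ' := by
    rintro ⟨s, hs⟩
    obtain ⟨g, hg⟩ := phiHom_surj hν s hs
    exact ⟨g, Subtype.ext hg⟩
  exact ⟨(MulEquiv.ofBijective Φ' ⟨hinj, hsurj⟩).symm⟩
end
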